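/- arXiv:1703.04763 — 8 statements merged into one kernel-verified Lean document; each statement's English description precedes it below -/
import Mathlib

section
/- Let X ⊂ H(D) be a Banach space with bounded point evaluations δ_z, v a radial weight, and g ∈ H(D). The integral operator T_g f(z) = ∫_0^z f(w) g'(w) dw is bounded from X to B_v if and only if sup_{z∈D} v(z)|g'(z)|·||δ_z||_{X*} < ∞, and in that case ||T_g|| = sup_{z∈D} v(z)|g'(z)|·||δ_z||. -/
open Metric intervalIntegral


/-- Key analytic lemma: the derivative of `z ↦ ∫_0^1 φ(tz)·z dt` at a point of the unit
disk is `φ z₀`, for `φ` holomorphic on the disk. -/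
lemma key_hasDerivAt (φ : ℂ → ℂ) (hφ : DifferentiableOn ℂ φ (Metric.ball 0 1))
    (z₀ : ℂ) (hz : z₀ ∈ Metric.ball (0:ℂ) 1) :
    HasDerivAt (fun z => ∫ t in (0:ℝ)..1, φ ((t : ℂ) * z) * z) (φ z₀) z₀ := by
  rw [Metric.mem_ball, dist_zero_right] at hz
  set r : ℝ := (1 + ‖z₀‖) / 2 with hr_def
  have hz₀r : ‖z₀‖ < r := by rw [hr_def]; linarith
  have hr1 : r < 1 := by rw [hr_def]; linarith
  have hr0 : 0 < r := lt_of_le_of_lt (norm_nonneg _) hz₀r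
  set ε : ℝ := (1 - ‖z₀‖) / 2 with hε_def
  have hε : 0 < ε := by rw [hε_def]; linarith
  have hball : ∀ x ∈ Metric.ball z₀ ε, ‖x‖ < r := by
    intro x hx
    rw [Metric.mem_ball] at hx
    calc ‖x‖ = ‖z₀ + (x - z₀)‖ := by ring_nf
    _ ≤ ‖z₀‖ + ‖x - z₀‖ := norm_add_le _ _
    _ < ‖z₀‖ + ε := by
        have := hx; rw [dist_eq_norm] at this; linarith
    _ = r := by rw [hε_def, hr_def]; ring
  -- continuity of φ and of its derivative
  have hφc : ContinuousOn φ (Metric.ball 0 1) := hφ.continuousOn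
  have hA : AnalyticOnNhd ℂ φ (Metric.ball 0 1) := hφ.analyticOnNhd isOpen_ball
  have hφ' : DifferentiableOn ℂ (deriv φ) (Metric.ball 0 1) := hA.deriv.differentiableOn
  have hφ'c : ContinuousOn (deriv φ) (Metric.ball 0 1) := hφ'.continuousOn
  -- bounds on the closed ball of radius r
  have hsub : Metric.closedBall (0:ℂ) r ⊆ Metric.ball 0 1 := by
    intro w hw
    rw [Metric.mem_closedBall, dist_zero_right] at hw
    rw [Metric.mem_ball, dist_zero_right]; linarith
  obtain ⟨K₁, hK₁⟩ := (isCompact_closedBall (0:ℂ) r).exists_bound_of_continuousOn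
    (hφc.mono hsub)
  obtain ⟨K₂, hK₂⟩ := (isCompact_closedBall (0:ℂ) r).exists_bound_of_continuousOn
    (hφ'c.mono hsub)
  set K : ℝ := max K₁ K₂ with hK_def
  have hKφ : ∀ w ∈ Metric.closedBall (0:ℂ) r, ‖φ w‖ ≤ K := fun w hw =>
    (hK₁ w hw).trans (le_max_left _ _)
  have hKφ' : ∀ w ∈ Metric.closedBall (0:ℂ) r, ‖deriv φ w‖ ≤ K := fun w hw =>
    (hK₂ w hw).trans (le_max_right _ _)
  have hK0 : 0 ≤ K := le_trans (norm_nonneg (φ 0))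
    (hKφ 0 (by simp [Metric.mem_closedBall, hr0.le]))
  -- membership lemmas
  have hmem1 : ∀ x : ℂ, ‖x‖ < 1 → ∀ t : ℝ, t ∈ Set.Icc (0:ℝ) 1 → (t:ℂ) * x ∈ Metric.ball (0:ℂ) 1 := by
    intro x hx t ht
    rw [Metric.mem_ball, dist_zero_right, norm_mul, Complex.norm_real, Real.norm_eq_abs,
      abs_of_nonneg ht.1]
    calc t * ‖x‖ ≤ 1 * ‖x‖ := by
          apply mul_le_mul_of_nonneg_right ht.2 (norm_nonneg x)
    _ = ‖x‖ := one_mul _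
    _ < 1 := hx
  have hmemr : ∀ x : ℂ, ‖x‖ < r → ∀ t : ℝ, t ∈ Set.Icc (0:ℝ) 1 →
      (t:ℂ) * x ∈ Metric.closedBall (0:ℂ) r := by
    intro x hx t ht
    rw [Metric.mem_closedBall, dist_zero_right, norm_mul, Complex.norm_real, Real.norm_eq_abs,
      abs_of_nonneg ht.1]
    calc t * ‖x‖ ≤ 1 * ‖x‖ := mul_le_mul_of_nonneg_right ht.2 (norm_nonneg x)
    _ = ‖x‖ := one_mul _
    _ ≤ r := hx.le
  have hIoc : (Set.uIoc (0:ℝ) 1) ⊆ Set.Icc (0:ℝ) 1 := by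
    rw [Set.uIoc_of_le zero_le_one]
    exact Set.Ioc_subset_Icc_self
  have huIcc : (Set.uIcc (0:ℝ) 1) = Set.Icc (0:ℝ) 1 := Set.uIcc_of_le zero_le_one
  -- continuity of the maps t ↦ φ(t x) etc.
  have hcont : ∀ x : ℂ, ‖x‖ < 1 → ContinuousOn (fun t : ℝ => φ ((t:ℂ) * x) * x)
      (Set.Icc (0:ℝ) 1) := by
    intro x hx
    apply ContinuousOn.mul _ continuousOn_const
    exact hφc.comp ((Complex.continuous_ofReal.mul continuous_const).continuousOn) (fun t ht => hmem1 x hx t ht)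
  have hcont' : ∀ x : ℂ, ‖x‖ < 1 → ContinuousOn
      (fun t : ℝ => (deriv φ ((t:ℂ) * x) * (t:ℂ)) * x + φ ((t:ℂ) * x)) (Set.Icc (0:ℝ) 1) := by
    intro x hx
    apply ContinuousOn.add
    · apply ContinuousOn.mul _ continuousOn_const
      apply ContinuousOn.mul
      · exact hφ'c.comp ((Complex.continuous_ofReal.mul continuous_const).continuousOn) (fun t ht => hmem1 x hx t ht)
      · exact Complex.continuous_ofReal.continuousOn
    · exact hφc.comp ((Complex.continuous_ofReal.mul continuous_const).continuousOn) (fun t ht => hmem1 x hx t ht)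
  -- differentiation in x, pointwise in t
  have hdiff : ∀ t : ℝ, t ∈ Set.Icc (0:ℝ) 1 → ∀ x : ℂ, ‖x‖ < 1 →
      HasDerivAt (fun y : ℂ => φ ((t:ℂ) * y) * y)
        ((deriv φ ((t:ℂ) * x) * (t:ℂ)) * x + φ ((t:ℂ) * x)) x := by
    intro t ht x hx
    have hmem := hmem1 x hx t ht
    have h3 : HasDerivAt φ (deriv φ ((t:ℂ) * x)) ((t:ℂ) * x) :=
      ((hφ.differentiableAt (isOpen_ball.mem_nhds hmem)).hasDerivAt)
    have h2 : HasDerivAt (fun y : ℂ => (t:ℂ) * y) (t:ℂ) x := by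
      simpa using (hasDerivAt_id x).const_mul (t:ℂ)
    have h4 : HasDerivAt (fun y : ℂ => φ ((t:ℂ) * y)) (deriv φ ((t:ℂ) * x) * (t:ℂ)) x :=
      HasDerivAt.comp x h3 h2
    have h5 := h4.mul (hasDerivAt_id x)
    simp only [mul_one, id_eq] at h5
    exact h5
  -- apply the dominated differentiation theorem
  have main := intervalIntegral.hasDerivAt_integral_of_dominated_loc_of_deriv_le
    (F := fun x t => φ ((t:ℂ) * x) * x)
    (F' := fun x t => (deriv φ ((t:ℂ) * x) * (t:ℂ)) * x + φ ((t:ℂ) * x))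
    (x₀ := z₀) (a := (0:ℝ)) (b := 1) (μ := MeasureTheory.volume)
    (bound := fun _ => K * r + K) (s := Metric.ball z₀ ε) (Metric.ball_mem_nhds z₀ hε)
    ?_ ?_ ?_ ?_ ?_ ?_
  · -- conclude : rewrite the integral of F' z₀
    have heq : (∫ t in (0:ℝ)..1, (deriv φ ((t:ℂ) * z₀) * (t:ℂ)) * z₀ + φ ((t:ℂ) * z₀)) = φ z₀ := by
      have hFTC := intervalIntegral.integral_eq_sub_of_hasDerivAt
        (f := fun t : ℝ => (t:ℂ) * φ ((t:ℂ) * z₀))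
        (f' := fun t : ℝ => (deriv φ ((t:ℂ) * z₀) * (t:ℂ)) * z₀ + φ ((t:ℂ) * z₀))
        (a := (0:ℝ)) (b := 1) ?_ ?_
      · rw [hFTC]; simp
      · intro t ht
        rw [huIcc] at ht
        have hmem := hmem1 z₀ hz t ht
        have h1 : HasDerivAt (fun t : ℝ => ((t:ℝ):ℂ)) 1 t := by
          exact Complex.ofRealCLM.hasDerivAt (x := t)
        have h2 : HasDerivAt (fun t : ℝ => ((t:ℝ):ℂ) * z₀) z₀ t := by
          simpa using h1.mul_const z₀
        have h3 : HasDerivAt φ (deriv φ ((t:ℂ) * z₀)) ((t:ℂ) * z₀) :=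
          ((hφ.differentiableAt (isOpen_ball.mem_nhds hmem)).hasDerivAt)
        have h4 : HasDerivAt (fun t : ℝ => φ (((t:ℝ):ℂ) * z₀))
            (deriv φ ((t:ℂ) * z₀) * z₀) t := HasDerivAt.comp t h3 h2
        have h5 := h1.mul h4
        simp only [Pi.mul_def] at h5
        convert h5 using 1
        · rfl
        ring
      · exact ((hcont' z₀ hz).mono huIcc.subset).intervalIntegrable
    rw [heq] at main
    exact main.2
  · -- measurability of F near z₀
    have : Metric.ball z₀ ε ∈ nhds z₀ := Metric.ball_mem_nhds z₀ hε
    filter_upwards [this] with x hx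
    have hx1 : ‖x‖ < 1 := lt_trans (hball x hx) hr1
    exact ((hcont x hx1).mono hIoc).aestronglyMeasurable measurableSet_uIoc
  · -- interval integrability of F z₀
    exact ((hcont z₀ hz).mono huIcc.subset).intervalIntegrable
  · -- measurability of F' z₀
    exact ((hcont' z₀ hz).mono hIoc).aestronglyMeasurable measurableSet_uIoc
  · -- bound
    apply Filter.Eventually.of_forall
    intro t ht x hx
    have ht' : t ∈ Set.Icc (0:ℝ) 1 := hIoc ht
    have hxr : ‖x‖ < r := hball x hx
    have hmem := hmemr x hxr t ht'
    calc ‖(deriv φ ((t:ℂ) * x) * (t:ℂ)) * x + φ ((t:ℂ) * x)‖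
        ≤ ‖(deriv φ ((t:ℂ) * x) * (t:ℂ)) * x‖ + ‖φ ((t:ℂ) * x)‖ := norm_add_le _ _
      _ ≤ K * r + K := by
          apply add_le_add
          · rw [norm_mul, norm_mul, Complex.norm_real, Real.norm_eq_abs, abs_of_nonneg ht'.1]
            calc ‖deriv φ ((t:ℂ) * x)‖ * t * ‖x‖ ≤ K * 1 * r := by
                  apply mul_le_mul _ hxr.le (norm_nonneg _) (by positivity)
                  apply mul_le_mul (hKφ' _ hmem) ht'.2 ht'.1 hK0
              _ = K * r := by ring
          · exact hKφ _ hmem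
  · exact intervalIntegrable_const
  · -- differentiability in x
    apply Filter.Eventually.of_forall
    intro t ht x hx
    exact hdiff t (hIoc ht) x (lt_trans (hball x hx) hr1)

/-- The open unit disk in the complex plane. -/
def UnitDisk : Set ℂ := Metric.ball (0 : ℂ) 1

/-- The integral operator `T_g f (z) = ∫_0^z f(w) g'(w) dw`, the integral being taken along
the segment from `0` to `z`. -/
noncomputable def intOp (g f : ℂ → ℂ) : ℂ → ℂ :=
  fun z => ∫ t in (0:ℝ)..1, (f ((t : ℂ) * z) * deriv g ((t : ℂ) * z)) * z

/-- Let `X ⊆ H(𝔻)` be a Banach space with bounded point evaluations `δ_z`, `v` a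
radial weight and `g` holomorphic on `𝔻`.  The integral operator `T_g` is bounded from `X` to
`B_v` (with seminorm `sup_{z ∈ 𝔻} v z * ‖f' z‖`) iff
`sup_{z ∈ 𝔻} v z * ‖g' z‖ * ‖δ_z‖ < ∞`, and in that case `‖T_g‖` (the least admissible
bound) equals this supremum. -/
theorem stmt_5 {X : Type*} [NormedAddCommGroup X] [NormedSpace ℂ X] [CompleteSpace X]
    (ι : X →ₗ[ℂ] (ℂ → ℂ)) (hι_inj : Function.Injective ι)
    (hι_hol : ∀ f : X, DifferentiableOn ℂ (ι f) UnitDisk)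
    (δ : ℂ → (X →L[ℂ] ℂ)) (hδ : ∀ z ∈ UnitDisk, ∀ f : X, δ z f = ι f z)
    (v : ℂ → ℝ)
    (hv_cont : ContinuousOn v UnitDisk)
    (hv_pos : ∀ z ∈ UnitDisk, 0 < v z)
    (hv_le1 : ∀ z ∈ UnitDisk, v z ≤ 1)
    (hv_rad : ∀ z ∈ UnitDisk, ∀ w ∈ UnitDisk, ‖z‖ = ‖w‖ → v z = v w)
    (g : ℂ → ℂ) (hg : DifferentiableOn ℂ g UnitDisk) :
    ((∃ C : ℝ, 0 ≤ C ∧ ∀ f : X, ∀ z ∈ UnitDisk,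
        v z * ‖deriv (intOp g (ι f)) z‖ ≤ C * ‖f‖)
      ↔ ∃ M : ℝ, ∀ z ∈ UnitDisk, v z * ‖deriv g z‖ * ‖δ z‖ ≤ M) ∧
    ((∃ C : ℝ, 0 ≤ C ∧ ∀ f : X, ∀ z ∈ UnitDisk,
        v z * ‖deriv (intOp g (ι f)) z‖ ≤ C * ‖f‖) →
      sInf {C : ℝ | 0 ≤ C ∧ ∀ f : X, ∀ z ∈ UnitDisk,
          v z * ‖deriv (intOp g (ι f)) z‖ ≤ C * ‖f‖}
        = sSup ((fun z => v z * ‖deriv g z‖ * ‖δ z‖) '' UnitDisk)) := by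
  have hg' : DifferentiableOn ℂ (deriv g) UnitDisk :=
    ((hg.analyticOnNhd isOpen_ball).deriv).differentiableOn
  -- key derivative identity
  have hderiv : ∀ f : X, ∀ z ∈ UnitDisk, deriv (intOp g (ι f)) z = ι f z * deriv g z := by
    intro f z hz
    have hφ : DifferentiableOn ℂ (fun w => ι f w * deriv g w) (Metric.ball 0 1) :=
      (hι_hol f).mul hg'
    have h := key_hasDerivAt (fun w => ι f w * deriv g w) hφ z hz
    exact h.deriv
  -- the norm identity
  have hnorm : ∀ f : X, ∀ z ∈ UnitDisk,
      v z * ‖deriv (intOp g (ι f)) z‖ = (v z * ‖deriv g z‖) * ‖δ z f‖ := by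
    intro f z hz
    rw [hderiv f z hz, norm_mul, hδ z hz f]
    ring
  -- forward bound: each admissible C dominates the pointwise quantity
  have hub : ∀ C : ℝ, (0 ≤ C ∧ ∀ f : X, ∀ z ∈ UnitDisk,
      v z * ‖deriv (intOp g (ι f)) z‖ ≤ C * ‖f‖) →
      ∀ z ∈ UnitDisk, v z * ‖deriv g z‖ * ‖δ z‖ ≤ C := by
    intro C ⟨hC0, hC⟩ z hz
    have hc0 : 0 ≤ v z * ‖deriv g z‖ :=
      mul_nonneg (hv_pos z hz).le (norm_nonneg _)
    have hop : ‖((v z * ‖deriv g z‖ : ℝ)) • δ z‖ ≤ C := by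
      apply ContinuousLinearMap.opNorm_le_bound _ hC0
      intro f
      rw [ContinuousLinearMap.smul_apply, norm_smul, Real.norm_eq_abs, abs_of_nonneg hc0]
      calc (v z * ‖deriv g z‖) * ‖δ z f‖
          = v z * ‖deriv (intOp g (ι f)) z‖ := (hnorm f z hz).symm
        _ ≤ C * ‖f‖ := hC f z hz
    calc v z * ‖deriv g z‖ * ‖δ z‖
        = ‖((v z * ‖deriv g z‖ : ℝ)) • δ z‖ := by
          rw [norm_smul (v z * ‖deriv g z‖) (δ z), Real.norm_eq_abs, abs_of_nonneg hc0]
      _ ≤ C := hop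
  -- backward bound: any pointwise bound M gives an admissible constant
  have hlb : ∀ M : ℝ, (∀ z ∈ UnitDisk, v z * ‖deriv g z‖ * ‖δ z‖ ≤ M) →
      ∀ f : X, ∀ z ∈ UnitDisk, v z * ‖deriv (intOp g (ι f)) z‖ ≤ M * ‖f‖ := by
    intro M hM f z hz
    have hc0 : 0 ≤ v z * ‖deriv g z‖ :=
      mul_nonneg (hv_pos z hz).le (norm_nonneg _)
    calc v z * ‖deriv (intOp g (ι f)) z‖
        = (v z * ‖deriv g z‖) * ‖δ z f‖ := hnorm f z hz
      _ ≤ (v z * ‖deriv g z‖) * (‖δ z‖ * ‖f‖) :=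
          mul_le_mul_of_nonneg_left ((δ z).le_opNorm f) hc0
      _ = (v z * ‖deriv g z‖ * ‖δ z‖) * ‖f‖ := by ring
      _ ≤ M * ‖f‖ := mul_le_mul_of_nonneg_right (hM z hz) (norm_nonneg f)
  have h0mem : (0:ℂ) ∈ UnitDisk := by simp [UnitDisk]
  constructor
  · constructor
    · rintro ⟨C, hC⟩
      exact ⟨C, hub C hC⟩
    · rintro ⟨M, hM⟩
      refine ⟨max M 0, le_max_right _ _, fun f z hz => ?_⟩
      calc v z * ‖deriv (intOp g (ι f)) z‖ ≤ M * ‖f‖ := hlb M hM f z hz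
        _ ≤ max M 0 * ‖f‖ := mul_le_mul_of_nonneg_right (le_max_left _ _) (norm_nonneg f)
  · rintro ⟨C₀, hC₀⟩
    set A := {C : ℝ | 0 ≤ C ∧ ∀ f : X, ∀ z ∈ UnitDisk,
        v z * ‖deriv (intOp g (ι f)) z‖ ≤ C * ‖f‖} with hA_def
    set I := ((fun z => v z * ‖deriv g z‖ * ‖δ z‖) '' UnitDisk) with hI_def
    have hAne : A.Nonempty := ⟨C₀, hC₀⟩
    have hIne : I.Nonempty := ⟨_, Set.mem_image_of_mem _ h0mem⟩
    have hIub : ∀ C ∈ A, ∀ y ∈ I, y ≤ C := by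
      rintro C hC y ⟨z, hz, rfl⟩
      exact hub C hC z hz
    have hIbdd : BddAbove I := ⟨C₀, fun y hy => hIub C₀ hC₀ y hy⟩
    have hSnn : 0 ≤ sSup I := by
      have h0le : (0:ℝ) ≤ v 0 * ‖deriv g 0‖ * ‖δ 0‖ :=
        mul_nonneg (mul_nonneg (hv_pos 0 h0mem).le (norm_nonneg _)) (norm_nonneg _)
      exact le_trans h0le (le_csSup hIbdd (Set.mem_image_of_mem _ h0mem))
    have hSmem : sSup I ∈ A := by
      refine ⟨hSnn, ?_⟩
      apply hlb
      intro z hz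
      exact le_csSup hIbdd (Set.mem_image_of_mem _ hz)
    have hAbdd : BddBelow A := ⟨0, fun C hC => hC.1⟩
    apply le_antisymm
    · exact csInf_le hAbdd hSmem
    · apply le_csInf hAne
      intro C hC
      exact csSup_le hIne (fun y hy => hIub C hC y hy)
end

section
/- Let g ∈ H(D) and β = γ > 0. The integral operator T_g is bounded from H_β to H_β if and only if g belongs to the Bloch space B, i.e. sup_{z∈D}(1−|z|²)|g'(z)| < ∞. -/
open Metric intervalIntegral

lemma mem_unitDisk {z : ℂ} : z ∈ UnitDisk ↔ ‖z‖ < 1 := mem_ball_zero_iff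

lemma segInt_hasDerivAt (φ : ℂ → ℂ) (hφ : DifferentiableOn ℂ φ UnitDisk) {z : ℂ}
    (hz : z ∈ UnitDisk) :
    HasDerivAt (fun z => ∫ t in (0:ℝ)..1, φ ((t : ℂ) * z) * z) (φ z) z := by
  have hop : IsOpen UnitDisk := isOpen_ball
  have hφ' : DifferentiableOn ℂ (deriv φ) UnitDisk :=
    ((hφ.analyticOnNhd hop).deriv).differentiableOn
  have hcφ := hφ.continuousOn
  have hcφ' := hφ'.continuousOn
  rw [mem_unitDisk] at hz
  set r : ℝ := (1 + ‖z‖) / 2 with hrdef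
  have hzr : ‖z‖ < r := by simp only [hrdef]; linarith
  have hr0 : 0 ≤ r := le_trans (norm_nonneg z) hzr.le
  have hr1 : r < 1 := by simp only [hrdef]; linarith
  have hsub : closedBall (0:ℂ) r ⊆ UnitDisk := closedBall_subset_ball hr1
  obtain ⟨K₁, hK₁⟩ := (isCompact_closedBall (0:ℂ) r).exists_bound_of_continuousOn
    (hcφ.mono hsub)
  obtain ⟨K₂, hK₂⟩ := (isCompact_closedBall (0:ℂ) r).exists_bound_of_continuousOn
    (hcφ'.mono hsub)
  have hK₂0 : 0 ≤ K₂ :=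
    le_trans (norm_nonneg _) (hK₂ 0 (mem_closedBall_self hr0))
  set ε : ℝ := r - ‖z‖ with hεdef
  have hε : 0 < ε := by simp only [hεdef]; linarith
  have hxr : ∀ x ∈ ball z ε, ‖x‖ ≤ r := by
    intro x hx
    have : ‖x - z‖ < ε := by rwa [mem_ball, dist_eq_norm] at hx
    have h2 : ‖x‖ - ‖z‖ ≤ ‖x - z‖ := norm_sub_norm_le x z
    simp only [hεdef] at this; linarith
  have hmem : ∀ (x : ℂ), ‖x‖ ≤ r → ∀ t : ℝ, t ∈ Set.Icc (0:ℝ) 1 →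
      (t:ℂ) * x ∈ closedBall (0:ℂ) r := by
    intro x hx t ht
    rw [mem_closedBall_zero_iff, norm_mul, Complex.norm_real, Real.norm_eq_abs,
      abs_of_nonneg ht.1]
    calc t * ‖x‖ ≤ 1 * r := by
          apply mul_le_mul ht.2 hx (norm_nonneg x) zero_le_one
      _ = r := one_mul r
  set F' : ℂ → ℝ → ℂ := fun x t => deriv φ ((t:ℂ) * x) * (t:ℂ) * x + φ ((t:ℂ) * x) with hF'def
  have hIsub : Set.uIoc (0:ℝ) 1 ⊆ Set.Icc (0:ℝ) 1 := by
    rw [Set.uIoc_of_le zero_le_one]; exact Set.Ioc_subset_Icc_self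
  have hcont : ∀ (x : ℂ), ‖x‖ ≤ r → ContinuousOn (fun t : ℝ => φ ((t:ℂ) * x) * x)
      (Set.Icc (0:ℝ) 1) := by
    intro x hx
    refine ContinuousOn.mul ?_ continuousOn_const
    exact hcφ.comp ((Complex.continuous_ofReal.mul continuous_const).continuousOn)
      (fun t ht => hsub (hmem x hx t ht))
  have hcont' : ContinuousOn (fun t : ℝ => F' z t) (Set.Icc (0:ℝ) 1) := by
    simp only [hF'def]
    refine ContinuousOn.add (ContinuousOn.mul (ContinuousOn.mul ?_ ?_) continuousOn_const) ?_
    · exact hcφ'.comp ((Complex.continuous_ofReal.mul continuous_const).continuousOn)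
        (fun t ht => hsub (hmem z hzr.le t ht))
    · exact Complex.continuous_ofReal.continuousOn
    · exact hcφ.comp ((Complex.continuous_ofReal.mul continuous_const).continuousOn)
        (fun t ht => hsub (hmem z hzr.le t ht))
  have main := intervalIntegral.hasDerivAt_integral_of_dominated_loc_of_deriv_le
    (F := fun x => fun t : ℝ => φ ((t:ℂ) * x) * x) (F' := F')
    (bound := fun _ => K₂ * r + K₁) (μ := MeasureTheory.volume) (a := (0:ℝ)) (b := 1)
    (x₀ := z)
    (ball_mem_nhds z hε) ?_ ?_ ?_ ?_ ?_ ?_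
  · obtain ⟨hint, hder⟩ := main
    set u : ℝ → ℂ := fun t => (t:ℂ) * φ ((t:ℂ) * z) with hudef
    have hu : ∀ t ∈ Set.uIcc (0:ℝ) 1, HasDerivAt u (F' z t) t := by
      intro t ht
      rw [Set.uIcc_of_le zero_le_one] at ht
      have hmemt : (t:ℂ) * z ∈ UnitDisk := hsub (hmem z hzr.le t ht)
      have ha : HasDerivAt (fun s : ℝ => (s:ℂ)) 1 t :=
        (hasDerivAt_id ((t : ℝ) : ℂ)).comp_ofReal
      have hinner : HasDerivAt (fun w : ℂ => w * z) z ((t:ℝ):ℂ) := by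
        simpa using (hasDerivAt_id ((t:ℝ):ℂ)).mul_const z
      have hφAt : HasDerivAt φ (deriv φ ((t:ℂ) * z)) ((t:ℂ) * z) :=
        (hφ.differentiableAt (hop.mem_nhds hmemt)).hasDerivAt
      have hb : HasDerivAt (fun w : ℂ => φ (w * z)) (deriv φ ((t:ℂ) * z) * z) ((t:ℝ):ℂ) :=
        hφAt.comp ((t:ℝ):ℂ) hinner
      have hc : HasDerivAt (fun s : ℝ => φ ((s:ℂ) * z)) (deriv φ ((t:ℂ) * z) * z) t :=
        hb.comp_ofReal
      have := ha.mul hc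
      refine this.congr_deriv ?_
      simp only [hF'def]; ring
    have huint : IntervalIntegrable (F' z) MeasureTheory.volume 0 1 := hint
    have hval : (∫ t in (0:ℝ)..1, F' z t) = φ z := by
      rw [intervalIntegral.integral_eq_sub_of_hasDerivAt hu huint]
      simp [hudef]
    rwa [hval] at hder
  · filter_upwards [ball_mem_nhds z hε] with x hx
    exact ((hcont x (hxr x hx)).mono hIsub).aestronglyMeasurable measurableSet_uIoc
  · apply ContinuousOn.intervalIntegrable
    rw [Set.uIcc_of_le zero_le_one]
    exact hcont z hzr.le
  · exact (hcont'.mono hIsub).aestronglyMeasurable measurableSet_uIoc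
  · apply MeasureTheory.ae_of_all
    intro t ht x hx
    have ht' : t ∈ Set.Icc (0:ℝ) 1 := hIsub ht
    have hxmem : (t:ℂ) * x ∈ closedBall (0:ℂ) r := hmem x (hxr x hx) t ht'
    have h1 : ‖deriv φ ((t:ℂ) * x) * (t:ℂ) * x‖ ≤ K₂ * r := by
      rw [norm_mul, norm_mul]
      calc ‖deriv φ ((t:ℂ)*x)‖ * ‖((t:ℝ):ℂ)‖ * ‖x‖ ≤ K₂ * 1 * r := by
            apply mul_le_mul _ (hxr x hx) (norm_nonneg x) (by positivity)
            apply mul_le_mul (hK₂ _ hxmem) _ (norm_nonneg _) hK₂0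
            rw [Complex.norm_real, Real.norm_eq_abs, abs_of_nonneg ht'.1]; exact ht'.2
        _ = K₂ * r := by ring
    have h2 : ‖φ ((t:ℂ) * x)‖ ≤ K₁ := hK₁ _ hxmem
    calc ‖F' x t‖ ≤ ‖deriv φ ((t:ℂ) * x) * (t:ℂ) * x‖ + ‖φ ((t:ℂ) * x)‖ := norm_add_le _ _
      _ ≤ K₂ * r + K₁ := add_le_add h1 h2
  · exact intervalIntegrable_const
  · apply MeasureTheory.ae_of_all
    intro t ht x hx
    have ht' : t ∈ Set.Icc (0:ℝ) 1 := hIsub ht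
    have hmemt : (t:ℂ) * x ∈ UnitDisk := hsub (hmem x (hxr x hx) t ht')
    have h1 : HasDerivAt (fun y : ℂ => (t:ℂ) * y) (t:ℂ) x := by
      simpa using (hasDerivAt_id x).const_mul (t:ℂ)
    have h2 : HasDerivAt φ (deriv φ ((t:ℂ) * x)) ((t:ℂ) * x) :=
      (hφ.differentiableAt (hop.mem_nhds hmemt)).hasDerivAt
    have h3 : HasDerivAt (fun y : ℂ => φ ((t:ℂ) * y)) (deriv φ ((t:ℂ) * x) * (t:ℂ)) x :=
      h2.comp x h1
    have := h3.mul (hasDerivAt_id x)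
    refine this.congr_deriv ?_
    simp only [hF'def, id]; ring

lemma intOp_hasDerivAt (g f : ℂ → ℂ) (hg : DifferentiableOn ℂ g UnitDisk)
    (hf : DifferentiableOn ℂ f UnitDisk) {z : ℂ} (hz : z ∈ UnitDisk) :
    HasDerivAt (intOp g f) (f z * deriv g z) z := by
  have hop : IsOpen UnitDisk := isOpen_ball
  have hφ : DifferentiableOn ℂ (fun w => f w * deriv g w) UnitDisk :=
    hf.mul ((hg.analyticOnNhd hop).deriv).differentiableOn
  exact segInt_hasDerivAt _ hφ hz

lemma normSq_key (a z : ℂ) : ‖1 - (starRingEnd ℂ) a * z‖ ^ 2 =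
    (1 - ‖a‖ ^ 2) * (1 - ‖z‖ ^ 2) + ‖a - z‖ ^ 2 := by
  have h : ∀ w : ℂ, ‖w‖ ^ 2 = Complex.normSq w := fun w => by
    rw [Complex.sq_norm]
  simp only [h, Complex.normSq_apply, Complex.sub_re, Complex.sub_im, Complex.mul_re,
    Complex.mul_im, Complex.one_re, Complex.one_im, Complex.conj_re, Complex.conj_im]
  ring

lemma cauchy_est (β : ℝ) (hβ : 0 < β) (h : ℂ → ℂ)
    (hd : ∀ w ∈ UnitDisk, DifferentiableAt ℂ h w) {K : ℝ}
    (hK : ∀ w ∈ UnitDisk, (1 - ‖w‖ ^ 2) ^ β * ‖h w‖ ≤ K) {a : ℂ} (ha : a ∈ UnitDisk) :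
    ‖deriv h a‖ ≤ (K / ((1 - ‖a‖) / 2) ^ β) / ((1 - ‖a‖) / 2) := by
  rw [mem_unitDisk] at ha
  set ρ : ℝ := (1 - ‖a‖) / 2 with hρdef
  have hρ : 0 < ρ := by simp only [hρdef]; linarith
  have hsub : closedBall a ρ ⊆ UnitDisk := by
    intro w hw
    rw [mem_closedBall, dist_eq_norm] at hw
    have h2 : ‖w‖ - ‖a‖ ≤ ‖w - a‖ := norm_sub_norm_le w a
    rw [mem_unitDisk]
    simp only [hρdef] at hw; linarith
  have hbd : ∀ w ∈ sphere a ρ, ‖h w‖ ≤ K / ρ ^ β := by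
    intro w hw
    have hw' : w ∈ closedBall a ρ := sphere_subset_closedBall hw
    have hwD : w ∈ UnitDisk := hsub hw'
    have hwn : ‖w‖ < 1 := mem_unitDisk.1 hwD
    have hwn' : ‖w‖ ≤ ‖a‖ + ρ := by
      rw [mem_closedBall, dist_eq_norm] at hw'
      have := norm_sub_norm_le w a; linarith
    have h1 : ρ ≤ 1 - ‖w‖ ^ 2 := by nlinarith [norm_nonneg w, norm_nonneg a]
    have h2 : ρ ^ β ≤ (1 - ‖w‖ ^ 2) ^ β := Real.rpow_le_rpow hρ.le h1 hβ.le
    have h3 : ρ ^ β * ‖h w‖ ≤ K :=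
      le_trans (mul_le_mul_of_nonneg_right h2 (norm_nonneg _)) (hK w hwD)
    rw [le_div_iff₀ (Real.rpow_pos_of_pos hρ β)]
    calc ‖h w‖ * ρ ^ β = ρ ^ β * ‖h w‖ := mul_comm _ _
      _ ≤ K := h3
  have hdc : DiffContOnCl ℂ h (ball a ρ) := by
    constructor
    · exact fun w hw => (hd w (hsub (ball_subset_closedBall hw))).differentiableWithinAt
    · intro w hw
      exact ((hd w (hsub (closure_ball_subset_closedBall hw))).continuousAt).continuousWithinAt
  exact Complex.norm_deriv_le_of_forall_mem_sphere_norm_le hρ hdc hbd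

section TestFn
variable (β : ℝ) (a : ℂ)

noncomputable def testFn : ℂ → ℂ :=
  fun w => (((1 - ‖a‖ ^ 2) ^ β : ℝ) : ℂ) * (1 - (starRingEnd ℂ) a * w) ^ (((-(2 * β) : ℝ)) : ℂ)

variable {a}

lemma base_re_pos (ha : a ∈ UnitDisk) {w : ℂ} (hw : w ∈ UnitDisk) :
    0 < (1 - (starRingEnd ℂ) a * w).re := by
  rw [mem_unitDisk] at ha hw
  have h1 : ((starRingEnd ℂ) a * w).re ≤ ‖(starRingEnd ℂ) a * w‖ :=
    Complex.re_le_norm _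
  have h2 : ‖(starRingEnd ℂ) a * w‖ = ‖a‖ * ‖w‖ := by
    rw [norm_mul, Complex.norm_conj]
  have h3 : ‖a‖ * ‖w‖ < 1 := by nlinarith [norm_nonneg a, norm_nonneg w]
  simp only [Complex.sub_re, Complex.one_re]
  linarith [h1.trans_eq h2]

lemma base_ne (ha : a ∈ UnitDisk) {w : ℂ} (hw : w ∈ UnitDisk) :
    (1 - (starRingEnd ℂ) a * w) ≠ 0 := by
  intro h
  have := base_re_pos ha hw
  rw [h] at this; simp at this

lemma testFn_diff (ha : a ∈ UnitDisk) : DifferentiableOn ℂ (testFn β a) UnitDisk := by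
  intro w hw
  apply DifferentiableAt.differentiableWithinAt
  apply DifferentiableAt.const_mul
  apply DifferentiableAt.cpow
  · exact (differentiableAt_const (1:ℂ)).sub ((differentiableAt_id).const_mul _)
  · exact differentiableAt_const _
  · exact Complex.mem_slitPlane_iff.2 (Or.inl (base_re_pos ha hw))

lemma testFn_norm (ha : a ∈ UnitDisk) {w : ℂ} :
    ‖testFn β a w‖ = (1 - ‖a‖ ^ 2) ^ β * ‖1 - (starRingEnd ℂ) a * w‖ ^ (-(2 * β)) := by
  have ha' : ‖a‖ < 1 := mem_unitDisk.1 ha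
  have h0 : (0:ℝ) ≤ (1 - ‖a‖ ^ 2) ^ β := Real.rpow_nonneg (by nlinarith [norm_nonneg a]) β
  rw [testFn, norm_mul, Complex.norm_real, Real.norm_eq_abs, abs_of_nonneg h0,
    Complex.norm_cpow_real]

lemma testFn_bound (hβ : 0 < β) (ha : a ∈ UnitDisk) {w : ℂ} (hw : w ∈ UnitDisk) :
    (1 - ‖w‖ ^ 2) ^ β * ‖testFn β a w‖ ≤ 1 := by
  have ha' : ‖a‖ < 1 := mem_unitDisk.1 ha
  have hw' : ‖w‖ < 1 := mem_unitDisk.1 hw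
  have hA : (0:ℝ) < 1 - ‖a‖ ^ 2 := by nlinarith [norm_nonneg a]
  have hW : (0:ℝ) < 1 - ‖w‖ ^ 2 := by nlinarith [norm_nonneg w]
  set d : ℝ := ‖1 - (starRingEnd ℂ) a * w‖ with hddef
  have hd0 : 0 < d := norm_pos_iff.2 (base_ne ha hw)
  have hkey : (1 - ‖a‖ ^ 2) * (1 - ‖w‖ ^ 2) ≤ d ^ 2 := by
    rw [hddef, normSq_key]; nlinarith [sq_nonneg ‖a - w‖]
  rw [testFn_norm β ha, ← mul_assoc]
  have e1 : (1 - ‖w‖ ^ 2) ^ β * (1 - ‖a‖ ^ 2) ^ β = ((1 - ‖a‖ ^ 2) * (1 - ‖w‖ ^ 2)) ^ β := by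
    rw [← Real.mul_rpow hW.le hA.le, mul_comm]
  rw [e1]
  have e2 : ((1 - ‖a‖ ^ 2) * (1 - ‖w‖ ^ 2)) ^ β ≤ (d ^ 2) ^ β :=
    Real.rpow_le_rpow (by positivity) hkey hβ.le
  have e3 : (d ^ 2 : ℝ) ^ β = d ^ (2 * β) := by
    rw [← Real.rpow_natCast d 2, ← Real.rpow_mul hd0.le]
    norm_num
  calc ((1 - ‖a‖ ^ 2) * (1 - ‖w‖ ^ 2)) ^ β * d ^ (-(2 * β))
      ≤ (d ^ 2) ^ β * d ^ (-(2 * β)) := by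
        apply mul_le_mul_of_nonneg_right e2 (Real.rpow_nonneg hd0.le _)
    _ = 1 := by rw [e3, ← Real.rpow_add hd0]; simp

lemma testFn_self (ha : a ∈ UnitDisk) :
    ‖testFn β a a‖ = (1 - ‖a‖ ^ 2) ^ (-β) := by
  have ha' : ‖a‖ < 1 := mem_unitDisk.1 ha
  have hA : (0:ℝ) < 1 - ‖a‖ ^ 2 := by nlinarith [norm_nonneg a]
  have hbase : (1 - (starRingEnd ℂ) a * a) = (((1 - ‖a‖ ^ 2 : ℝ)) : ℂ) := by
    rw [mul_comm, Complex.mul_conj]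
    push_cast [Complex.normSq_eq_norm_sq]
    ring
  rw [testFn_norm β ha, hbase, Complex.norm_real, Real.norm_eq_abs, abs_of_pos hA,
    ← Real.rpow_add hA]
  congr 1; ring

end TestFn

/-- For `β > 0` and `g ∈ H(𝔻)`, the integral operator `T_g : H_β → H_β` is
bounded iff `g` belongs to the Bloch space, i.e. `sup_{z ∈ 𝔻} (1 - |z|²) |g' z| < ∞`. -/
theorem stmt_8 (β : ℝ) (hβ : 0 < β)
    (g : ℂ → ℂ) (hg : DifferentiableOn ℂ g UnitDisk) :
    (∃ C : ℝ, 0 ≤ C ∧ ∀ f : ℂ → ℂ, DifferentiableOn ℂ f UnitDisk →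
        BddAbove ((fun z => (1 - ‖z‖ ^ 2) ^ β * ‖f z‖) '' UnitDisk) →
        ∀ z ∈ UnitDisk, (1 - ‖z‖ ^ 2) ^ β * ‖intOp g f z‖ ≤
          C * sSup ((fun w => (1 - ‖w‖ ^ 2) ^ β * ‖f w‖) '' UnitDisk))
    ↔ ∃ M : ℝ, ∀ z ∈ UnitDisk, (1 - ‖z‖ ^ 2) * ‖deriv g z‖ ≤ M := by
  have h0D : (0:ℂ) ∈ UnitDisk := by rw [mem_unitDisk]; simp
  constructor
  · rintro ⟨C, hC0, hC⟩
    refine ⟨C * 4 ^ (β + 1), ?_⟩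
    intro a haD
    have ha : ‖a‖ < 1 := mem_unitDisk.1 haD
    set f := testFn β a with hfdef
    have hfd : DifferentiableOn ℂ f UnitDisk := testFn_diff β haD
    have hBdd : BddAbove ((fun z => (1 - ‖z‖ ^ 2) ^ β * ‖f z‖) '' UnitDisk) := by
      refine ⟨1, ?_⟩
      rintro x ⟨w, hw, rfl⟩
      exact testFn_bound β hβ haD hw
    have hsup_le : sSup ((fun w => (1 - ‖w‖ ^ 2) ^ β * ‖f w‖) '' UnitDisk) ≤ 1 := by
      have hne : ((fun w => (1 - ‖w‖ ^ 2) ^ β * ‖f w‖) '' UnitDisk).Nonempty :=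
        ⟨_, ⟨0, h0D, rfl⟩⟩
      apply csSup_le hne
      rintro x ⟨w, hw, rfl⟩
      exact testFn_bound β hβ haD hw
    have hCb : ∀ w ∈ UnitDisk, (1 - ‖w‖ ^ 2) ^ β * ‖intOp g f w‖ ≤ C := fun w hw =>
      (hC f hfd hBdd w hw).trans (mul_le_of_le_one_right hC0 hsup_le)
    have hder : ∀ w ∈ UnitDisk, HasDerivAt (intOp g f) (f w * deriv g w) w :=
      fun w hw => intOp_hasDerivAt g f hg hfd hw
    have hEst := cauchy_est β hβ (intOp g f)
      (fun w hw => (hder w hw).differentiableAt) hCb haD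
    rw [(hder a haD).deriv] at hEst
    set ρ : ℝ := (1 - ‖a‖) / 2 with hρdef
    have hρ : 0 < ρ := by simp only [hρdef]; linarith
    set s : ℝ := 1 - ‖a‖ ^ 2 with hsdef
    have hs : 0 < s := by simp only [hsdef]; nlinarith [norm_nonneg a]
    have hnrm : ‖f a * deriv g a‖ = s ^ (-β) * ‖deriv g a‖ := by
      rw [norm_mul, testFn_self β haD]
    rw [hnrm] at hEst
    have e : s * ‖deriv g a‖ = s ^ (β + 1) * (s ^ (-β) * ‖deriv g a‖) := by
      have h1 : β + 1 + -β = 1 := by ring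
      rw [← mul_assoc, ← Real.rpow_add hs, h1, Real.rpow_one]
    calc (1 - ‖a‖ ^ 2) * ‖deriv g a‖ = s ^ (β + 1) * (s ^ (-β) * ‖deriv g a‖) := e
      _ ≤ s ^ (β + 1) * ((C / ρ ^ β) / ρ) := by
          apply mul_le_mul_of_nonneg_left hEst (Real.rpow_nonneg hs.le _)
      _ = C * ((s / ρ) ^ (β + 1)) := by
          have eρ : ρ ^ β * ρ = ρ ^ (β+1) := by
            rw [Real.rpow_add hρ, Real.rpow_one]
          rw [div_div, eρ, Real.div_rpow hs.le hρ.le]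
          ring
      _ ≤ C * 4 ^ (β + 1) := by
          apply mul_le_mul_of_nonneg_left _ hC0
          apply Real.rpow_le_rpow (by positivity) _ (by linarith)
          have hne : (1:ℝ) - ‖a‖ ≠ 0 := by intro h; simp only [hρdef] at hρ; linarith
          have hρne : ((1:ℝ) - ‖a‖) / 2 ≠ 0 := by
            intro h; apply hne; linarith
          have : s / ρ = 2 * (1 + ‖a‖) := by
            simp only [hsdef, hρdef]
            rw [div_eq_iff hρne]
            ring
          rw [this]
          linarith [norm_nonneg a]
  · rintro ⟨M, hM⟩
    have hM0 : 0 ≤ M := by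
      have h := hM 0 h0D
      have h2 : (0:ℝ) ≤ (1 - ‖(0:ℂ)‖ ^ 2) * ‖deriv g 0‖ := by simp
      linarith
    have hC0' : 0 ≤ 2 ^ β * M / β :=
      div_nonneg (mul_nonneg (Real.rpow_nonneg (by norm_num) β) hM0) hβ.le
    refine ⟨2 ^ β * M / β, hC0', ?_⟩
    intro f hf hBdd z hzD
    set S := sSup ((fun w => (1 - ‖w‖ ^ 2) ^ β * ‖f w‖) '' UnitDisk) with hSdef
    have hS : ∀ w ∈ UnitDisk, (1 - ‖w‖ ^ 2) ^ β * ‖f w‖ ≤ S := fun w hw =>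
      le_csSup hBdd ⟨w, hw, rfl⟩
    have hS0 : 0 ≤ S := le_trans (by simp) (hS 0 h0D)
    by_cases hz0 : z = 0
    · subst hz0
      have hI0 : intOp g f 0 = 0 := by simp [intOp]
      rw [hI0]
      simp only [norm_zero, mul_zero]
      exact mul_nonneg hC0' hS0
    · have hz : ‖z‖ < 1 := mem_unitDisk.1 hzD
      set r : ℝ := ‖z‖ with hrdef
      have hr0 : 0 < r := norm_pos_iff.2 hz0
      have hr1 : r < 1 := hz
      have hp : ∀ t ∈ Set.Icc (0:ℝ) 1, (0:ℝ) < 1 - t * r := by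
        intro t ht; nlinarith [ht.1, ht.2]
      have hnorm_tz : ∀ t : ℝ, 0 ≤ t → ‖(t:ℂ) * z‖ = t * r := by
        intro t ht
        rw [norm_mul, Complex.norm_real, Real.norm_eq_abs, abs_of_nonneg ht]
      have hmemtz : ∀ t ∈ Set.Icc (0:ℝ) 1, (t:ℂ) * z ∈ UnitDisk := by
        intro t ht
        rw [mem_unitDisk, hnorm_tz t ht.1]
        nlinarith [ht.1, ht.2]
      set bound : ℝ → ℝ := fun t => S * M * (r * (1 - t * r) ^ (-(β+1))) with hbddef
      have key : ∀ t ∈ Set.Icc (0:ℝ) 1,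
          ‖(f ((t:ℂ)*z) * deriv g ((t:ℂ)*z)) * z‖ ≤ bound t := by
        intro t ht
        have htz := hmemtz t ht
        have hp' := hp t ht
        have hq : (0:ℝ) < 1 - (t*r)^2 := by nlinarith [mul_nonneg ht.1 hr0.le]
        set q : ℝ := 1 - (t*r)^2 with hqdef
        have e : (1 - ‖(t:ℂ)*z‖ ^ 2) = q := by rw [hnorm_tz t ht.1]
        have hf1 : ‖f ((t:ℂ)*z)‖ ≤ S / q ^ β := by
          rw [le_div_iff₀ (Real.rpow_pos_of_pos hq β), mul_comm, ← e]
          exact hS _ htz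
        have hg1 : ‖deriv g ((t:ℂ)*z)‖ ≤ M / q := by
          rw [le_div_iff₀ hq, mul_comm, ← e]
          exact hM _ htz
        have hY : (0:ℝ) ≤ S / q ^ β * (M / q) :=
          mul_nonneg (div_nonneg hS0 (Real.rpow_nonneg hq.le β)) (div_nonneg hM0 hq.le)
        have hstep : ‖(f ((t:ℂ)*z) * deriv g ((t:ℂ)*z)) * z‖ ≤ (S / q^β) * (M / q) * r := by
          rw [norm_mul, norm_mul]
          apply mul_le_mul _ le_rfl (norm_nonneg z) hY
          exact mul_le_mul hf1 hg1 (norm_nonneg _)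
            (div_nonneg hS0 (Real.rpow_nonneg hq.le β))
        have hpq : 1 - t*r ≤ q := by
          simp only [hqdef]; nlinarith [ht.1, ht.2, hr0.le, mul_nonneg ht.1 hr0.le]
        have hcomp : (S / q^β) * (M / q) * r ≤ bound t := by
          simp only [hbddef]
          have hqβ : (0:ℝ) < q ^ β := Real.rpow_pos_of_pos hq β
          have e1 : (S / q^β) * (M / q) * r = S * M * (r * (q^β * q)⁻¹) := by
            field_simp
          have e2 : q ^ β * q = q ^ (β+1) := by
            rw [Real.rpow_add hq, Real.rpow_one]
          have e3 : (q ^ (β+1))⁻¹ = q ^ (-(β+1)) := (Real.rpow_neg hq.le _).symm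
          rw [e1, e2, e3]
          have e4 : q ^ (-(β+1)) ≤ (1 - t*r) ^ (-(β+1)) :=
            Real.rpow_le_rpow_of_nonpos hp' hpq (by linarith)
          have e5 : r * q ^ (-(β+1)) ≤ r * (1 - t*r) ^ (-(β+1)) :=
            mul_le_mul_of_nonneg_left e4 hr0.le
          exact mul_le_mul_of_nonneg_left e5 (mul_nonneg hS0 hM0)
        exact hstep.trans hcomp
      have hcont_bound : ContinuousOn bound (Set.Icc (0:ℝ) 1) := by
        apply ContinuousOn.mul continuousOn_const
        apply ContinuousOn.mul continuousOn_const
        apply ContinuousOn.rpow_const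
        · exact continuousOn_const.sub (continuousOn_id.mul continuousOn_const)
        · intro t ht; exact Or.inl (ne_of_gt (hp t ht))
      have hint_bound : IntervalIntegrable bound MeasureTheory.volume 0 1 := by
        apply ContinuousOn.intervalIntegrable
        rwa [Set.uIcc_of_le zero_le_one]
      have hmain : ‖intOp g f z‖ ≤ |∫ t in (0:ℝ)..1, bound t| := by
        show ‖∫ t in (0:ℝ)..1, (f ((t:ℂ)*z) * deriv g ((t:ℂ)*z)) * z‖ ≤ _
        apply intervalIntegral.norm_integral_le_abs_of_norm_le _ hint_bound
        rw [MeasureTheory.ae_restrict_iff' measurableSet_uIoc]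
        apply MeasureTheory.ae_of_all
        intro t ht
        refine key t ?_
        rw [Set.uIoc_of_le zero_le_one] at ht
        exact Set.Ioc_subset_Icc_self ht
      set v : ℝ → ℝ := fun t => (1/β) * (1 - t*r) ^ (-β) with hvdef
      have hv : ∀ t ∈ Set.uIcc (0:ℝ) 1, HasDerivAt v (r * (1 - t*r) ^ (-(β+1))) t := by
        intro t ht
        rw [Set.uIcc_of_le zero_le_one] at ht
        have hp' := hp t ht
        have hin : HasDerivAt (fun t : ℝ => 1 - t*r) (-r) t := by
          simpa using ((hasDerivAt_id t).mul_const r).const_sub 1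
        have h2 := hin.rpow_const (p := -β) (Or.inl (ne_of_gt hp'))
        have h3 := h2.const_mul (1/β)
        refine h3.congr_deriv ?_
        rw [show -β - 1 = -(β+1) from by ring]
        field_simp [hβ.ne']
      have hvint : IntervalIntegrable (fun t => r * (1 - t*r) ^ (-(β+1)))
          MeasureTheory.volume 0 1 := by
        apply ContinuousOn.intervalIntegrable
        rw [Set.uIcc_of_le zero_le_one]
        apply ContinuousOn.mul continuousOn_const
        apply ContinuousOn.rpow_const
          (continuousOn_const.sub (continuousOn_id.mul continuousOn_const))
        intro t ht; exact Or.inl (ne_of_gt (hp t ht))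
      have hcalc : (∫ t in (0:ℝ)..1, r * (1 - t*r) ^ (-(β+1))) = v 1 - v 0 :=
        intervalIntegral.integral_eq_sub_of_hasDerivAt hv hvint
      have hIb : (∫ t in (0:ℝ)..1, bound t) = S * M * (v 1 - v 0) := by
        simp only [hbddef]
        rw [intervalIntegral.integral_const_mul, hcalc]
      have hv1 : v 1 - v 0 = (1/β) * ((1-r) ^ (-β) - 1) := by
        simp only [hvdef, one_mul, zero_mul, sub_zero, Real.one_rpow]
        ring
      have hone : (1:ℝ) ≤ (1-r) ^ (-β) := by
        have h := Real.rpow_le_rpow_of_nonpos (by linarith : (0:ℝ) < 1 - r)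
          (by linarith : 1 - r ≤ 1) (by linarith : -β ≤ 0)
        simpa using h
      have hnn : 0 ≤ v 1 - v 0 := by
        rw [hv1]
        apply mul_nonneg (by positivity)
        linarith
      have habs : |∫ t in (0:ℝ)..1, bound t| = S * M * (v 1 - v 0) := by
        rw [hIb, abs_of_nonneg (mul_nonneg (mul_nonneg hS0 hM0) hnn)]
      have h1z : (0:ℝ) < 1 - r ^ 2 := by nlinarith
      have hfin1 : ‖intOp g f z‖ ≤ S * M * ((1/β) * ((1-r) ^ (-β) - 1)) := by
        calc ‖intOp g f z‖ ≤ |∫ t in (0:ℝ)..1, bound t| := hmain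
          _ = S * M * ((1/β) * ((1-r) ^ (-β) - 1)) := by rw [habs, hv1]
      have hfin2 : S * M * ((1/β) * ((1-r) ^ (-β) - 1)) ≤ S * M * ((1/β) * (1-r) ^ (-β)) := by
        apply mul_le_mul_of_nonneg_left _ (mul_nonneg hS0 hM0)
        apply mul_le_mul_of_nonneg_left _ (by positivity)
        linarith
      calc (1 - ‖z‖ ^ 2) ^ β * ‖intOp g f z‖
          ≤ (1 - r ^ 2) ^ β * (S * M * ((1/β) * (1-r) ^ (-β))) := by
            apply mul_le_mul_of_nonneg_left (hfin1.trans hfin2)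
              (Real.rpow_nonneg h1z.le β)
        _ = S * M * (1/β) * ((1 - r ^ 2) ^ β * (1-r) ^ (-β)) := by ring
        _ = S * M * (1/β) * (1 + r) ^ β := by
            rw [Real.rpow_neg (by linarith : (0:ℝ) ≤ 1 - r), ← div_eq_mul_inv,
              ← Real.div_rpow h1z.le (by linarith : (0:ℝ) ≤ 1 - r)]
            congr 2
            have hne : (1:ℝ) - r ≠ 0 := by linarith
            field_simp
            ring
        _ ≤ S * M * (1/β) * 2 ^ β := by
            apply mul_le_mul_of_nonneg_left
              (Real.rpow_le_rpow (by linarith) (by linarith) hβ.le)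
            exact mul_nonneg (mul_nonneg hS0 hM0) (by positivity)
        _ = 2 ^ β * M / β * S := by ring
end

section
/- Let T : H(D) → H(D) be linear, X ⊂ H(D) a Banach space, and v a typical weight. Then T : X → H_{v,0} is bounded if and only if for each z ∈ D the functional f ↦ Tf(z) belongs to X*, and v(z)·(f ↦ Tf(z)) → 0 in the weak* topology of X* as |z| → 1. -/
open Metric Filter Topology

/-- The filter of `z` in the plane with `|z| → 1⁻`, used to express boundary limits. -/
noncomputable def bdryFilter : Filter ℂ := Filter.comap (fun z : ℂ => ‖z‖) (nhdsWithin 1 (Set.Iio 1))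

/-- Let `T` be a linear transformation of `H(𝔻)`, `X ⊆ H(𝔻)` a Banach space and
`v` a typical weight.  Then `T : X → H_{v,0}` is bounded iff each functional `f ↦ (T f)(z)`
belongs to `X*` and `v z * (f ↦ (T f)(z)) → 0` in the weak* topology of `X*` as `|z| → 1`. -/
theorem stmt_9 {X : Type*} [NormedAddCommGroup X] [NormedSpace ℂ X] [CompleteSpace X]
    (ι : X →ₗ[ℂ] (ℂ → ℂ)) (hι_inj : Function.Injective ι)
    (hι_hol : ∀ f : X, DifferentiableOn ℂ (ι f) UnitDisk)
    (T : (ℂ → ℂ) →ₗ[ℂ] (ℂ → ℂ))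
    (hT_hol : ∀ f : ℂ → ℂ, DifferentiableOn ℂ f UnitDisk →
      DifferentiableOn ℂ (T f) UnitDisk)
    (v : ℂ → ℝ)
    (hv_cont : ContinuousOn v UnitDisk)
    (hv_pos : ∀ z ∈ UnitDisk, 0 < v z)
    (hv_le1 : ∀ z ∈ UnitDisk, v z ≤ 1)
    (hv_rad : ∀ z ∈ UnitDisk, ∀ w ∈ UnitDisk, ‖z‖ = ‖w‖ → v z = v w)
    (hv_mono : ∀ z ∈ UnitDisk, ∀ w ∈ UnitDisk, ‖z‖ ≤ ‖w‖ → v w ≤ v z)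
    (hv_lim : Tendsto v bdryFilter (nhds 0)) :
    ((∃ C : ℝ, 0 ≤ C ∧ ∀ f : X, ∀ z ∈ UnitDisk, v z * ‖T (ι f) z‖ ≤ C * ‖f‖) ∧
      ∀ f : X, Tendsto (fun z => v z * ‖T (ι f) z‖) bdryFilter (nhds 0))
    ↔ ((∀ z ∈ UnitDisk, ∃ φ : X →L[ℂ] ℂ, ∀ f : X, φ f = T (ι f) z) ∧
       ∀ f : X, Tendsto (fun z => (v z : ℂ) * T (ι f) z) bdryFilter (nhds 0)) := by
  have hmem : ∀ z : ℂ, z ∈ UnitDisk ↔ ‖z‖ < 1 := fun z => mem_ball_zero_iff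
  have hev : ∀ᶠ z in bdryFilter, z ∈ UnitDisk := by
    have h1 : Set.Iio (1:ℝ) ∈ nhdsWithin (1:ℝ) (Set.Iio 1) := self_mem_nhdsWithin
    filter_upwards [Filter.preimage_mem_comap (m := fun z : ℂ => ‖z‖) h1] with z hz
    exact (hmem z).2 hz
  have hbasis : bdryFilter.HasBasis (fun a : ℝ => a < 1)
      (fun a => (fun z : ℂ => ‖z‖) ⁻¹' Set.Ioo a 1) :=
    (nhdsLT_basis (1:ℝ)).comap _
  have hnormeq : ∀ z ∈ UnitDisk, ∀ w : ℂ, ‖(v z : ℂ) * w‖ = v z * ‖w‖ := by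
    intro z hz w
    rw [norm_mul, Complex.norm_real, Real.norm_eq_abs, abs_of_nonneg (hv_pos z hz).le]
  constructor
  · rintro ⟨⟨C, hC0, hC⟩, hlim⟩
    constructor
    · intro z hz
      have hvz := hv_pos z hz
      refine ⟨LinearMap.mkContinuous ((LinearMap.proj z).comp (T.comp ι)) (C / v z)
        (fun f => ?_), fun f => rfl⟩
      have h := hC f z hz
      rw [div_mul_eq_mul_div, le_div_iff₀ hvz]
      calc ‖((LinearMap.proj z).comp (T.comp ι)) f‖ * v z
          = v z * ‖T (ι f) z‖ := mul_comm _ _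
        _ ≤ C * ‖f‖ := h
    · intro f
      rw [tendsto_zero_iff_norm_tendsto_zero]
      refine (hlim f).congr' ?_
      filter_upwards [hev] with z hz
      rw [hnormeq z hz]
  · rintro ⟨h1, h2⟩
    let φ : {w : ℂ // w ∈ UnitDisk} → X →L[ℂ] ℂ := fun z => (h1 z z.2).choose
    have hφ : ∀ z : {w : ℂ // w ∈ UnitDisk}, ∀ f : X, φ z f = T (ι f) z :=
      fun z => (h1 z z.2).choose_spec
    let g : {w : ℂ // w ∈ UnitDisk} → X →L[ℂ] ℂ := fun z => (v z : ℂ) • φ z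
    have hg : ∀ z : {w : ℂ // w ∈ UnitDisk}, ∀ f : X,
        ‖g z f‖ = v (z : ℂ) * ‖T (ι f) (z : ℂ)‖ := by
      intro z f
      show ‖(v (z:ℂ) : ℂ) • φ z f‖ = _
      rw [smul_eq_mul, hnormeq _ z.2, hφ z f]
    have hpt : ∀ f : X, ∃ C, ∀ z, ‖g z f‖ ≤ C := by
      intro f
      have hb : ∀ᶠ z in bdryFilter, ‖(v z : ℂ) * T (ι f) z‖ < 1 := by
        have := (h2 f).norm
        rw [norm_zero] at this
        exact this.eventually_lt_const one_pos
      obtain ⟨a, ha1, ha⟩ := hbasis.eventually_iff.mp hb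
      set b := max a 0 with hbdef
      have hb1 : b < 1 := max_lt ha1 one_pos
      have hKsub : Metric.closedBall (0:ℂ) b ⊆ UnitDisk := Metric.closedBall_subset_ball hb1
      have hcont : ContinuousOn (fun z => v z * ‖T (ι f) z‖) (Metric.closedBall (0:ℂ) b) :=
        (hv_cont.mono hKsub).mul
          (((hT_hol (ι f) (hι_hol f)).continuousOn.mono hKsub).norm)
      obtain ⟨M, hM⟩ := (isCompact_closedBall (0:ℂ) b).exists_bound_of_continuousOn hcont
      refine ⟨max M 1, fun z => ?_⟩
      rw [hg]
      rcases le_or_gt ‖(z:ℂ)‖ b with h | h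
      · exact le_trans (le_trans (le_abs_self _)
          (hM z (mem_closedBall_zero_iff.2 h))) (le_max_left _ _)
      · have hlt := ha ⟨lt_of_le_of_lt (le_max_left a 0) h, (hmem z).1 z.2⟩
        rw [hnormeq _ z.2] at hlt
        exact le_trans hlt.le (le_max_right _ _)
    obtain ⟨C', hC'⟩ := banach_steinhaus hpt
    refine ⟨⟨max C' 0, le_max_right _ _, fun f z hz => ?_⟩, fun f => ?_⟩
    · have hle := (g ⟨z, hz⟩).le_opNorm f
      rw [hg ⟨z, hz⟩ f] at hle
      calc v z * ‖T (ι f) z‖ ≤ ‖g ⟨z, hz⟩‖ * ‖f‖ := hle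
        _ ≤ max C' 0 * ‖f‖ :=
          mul_le_mul_of_nonneg_right ((hC' _).trans (le_max_left _ _)) (norm_nonneg f)
    · have hn := (h2 f).norm
      rw [norm_zero] at hn
      refine hn.congr' ?_
      filter_upwards [hev] with z hz
      rw [hnormeq z hz]
end

section
/- Let X ⊂ H(D) be a Banach space with bounded point evaluations δ_z, v a typical weight, u ∈ H(D), and φ : D → D holomorphic. The weighted composition operator W_{u,φ} is bounded from X to H_{v,0} if and only if v(z)u(z)δ_{φ(z)} → 0 in the weak* topology of X* as |z| → 1. -/
open Metric Filter Topology

/-- Let `X ⊆ H(𝔻)` be a Banach space with bounded point evaluations `δ_z`, `v` a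
typical weight, `u ∈ H(𝔻)`, and `φ : 𝔻 → 𝔻` holomorphic.  The weighted composition operator
`W_{u,φ}` is bounded from `X` to `H_{v,0}` iff `v z · u z · δ_{φ z} → 0` in the weak*
topology of `X*` as `|z| → 1`. -/
theorem stmt_10 {X : Type*} [NormedAddCommGroup X] [NormedSpace ℂ X] [CompleteSpace X]
    (ι : X →ₗ[ℂ] (ℂ → ℂ)) (hι_inj : Function.Injective ι)
    (hι_hol : ∀ f : X, DifferentiableOn ℂ (ι f) UnitDisk)
    (δ : ℂ → (X →L[ℂ] ℂ)) (hδ : ∀ z ∈ UnitDisk, ∀ f : X, δ z f = ι f z)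
    (v : ℂ → ℝ)
    (hv_cont : ContinuousOn v UnitDisk)
    (hv_pos : ∀ z ∈ UnitDisk, 0 < v z)
    (hv_le1 : ∀ z ∈ UnitDisk, v z ≤ 1)
    (hv_rad : ∀ z ∈ UnitDisk, ∀ w ∈ UnitDisk, ‖z‖ = ‖w‖ → v z = v w)
    (hv_mono : ∀ z ∈ UnitDisk, ∀ w ∈ UnitDisk, ‖z‖ ≤ ‖w‖ → v w ≤ v z)
    (hv_lim : Tendsto v bdryFilter (nhds 0))
    (u : ℂ → ℂ) (hu : DifferentiableOn ℂ u UnitDisk)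
    (φ : ℂ → ℂ) (hφ_hol : DifferentiableOn ℂ φ UnitDisk)
    (hφ_maps : Set.MapsTo φ UnitDisk UnitDisk) :
    ((∃ C : ℝ, 0 ≤ C ∧ ∀ f : X, ∀ z ∈ UnitDisk, v z * ‖u z * ι f (φ z)‖ ≤ C * ‖f‖) ∧
      ∀ f : X, Tendsto (fun z => v z * ‖u z * ι f (φ z)‖) bdryFilter (nhds 0))
    ↔ ∀ f : X, Tendsto (fun z => (v z : ℂ) * u z * δ (φ z) f) bdryFilter (nhds 0) := by
  have hev : ∀ᶠ z in bdryFilter, z ∈ UnitDisk := by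
    have h1 : Set.Iio (1 : ℝ) ∈ nhdsWithin (1 : ℝ) (Set.Iio 1) := self_mem_nhdsWithin
    have h2 : (fun z : ℂ => ‖z‖) ⁻¹' (Set.Iio 1) ∈ bdryFilter := Filter.preimage_mem_comap h1
    filter_upwards [h2] with z hz
    exact mem_ball_zero_iff.mpr hz
  have hnorm : ∀ f : X, ∀ z ∈ UnitDisk,
      ‖(v z : ℂ) * u z * δ (φ z) f‖ = v z * ‖u z * ι f (φ z)‖ := by
    intro f z hz
    rw [hδ (φ z) (hφ_maps hz) f, mul_assoc, norm_mul, Complex.norm_real,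
      Real.norm_of_nonneg (hv_pos z hz).le]
  constructor
  · rintro ⟨-, h2⟩ f
    rw [tendsto_zero_iff_norm_tendsto_zero]
    refine (h2 f).congr' ?_
    filter_upwards [hev] with z hz
    exact (hnorm f z hz).symm
  · intro h
    have h2 : ∀ f : X, Tendsto (fun z => v z * ‖u z * ι f (φ z)‖) bdryFilter (nhds 0) := by
      intro f
      have hn := (h f).norm
      rw [norm_zero] at hn
      refine hn.congr' ?_
      filter_upwards [hev] with z hz
      exact hnorm f z hz
    refine ⟨?_, h2⟩
    set T : UnitDisk → (X →L[ℂ] ℂ) := fun z => ((v z : ℂ) * u z) • δ (φ z) with hT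
    have hTf : ∀ f : X, ∀ z : UnitDisk, ‖T z f‖ = v (z : ℂ) * ‖u (z : ℂ) * ι f (φ z)‖ := by
      intro f z
      have : T z f = (v (z : ℂ) : ℂ) * u z * δ (φ (z : ℂ)) f := by
        simp [hT, smul_eq_mul, mul_assoc]
      rw [this, hnorm f z z.2]
    have hpt : ∀ f : X, ∃ C, ∀ z : UnitDisk, ‖T z f‖ ≤ C := by
      intro f
      set g : ℂ → ℝ := fun z => v z * ‖u z * ι f (φ z)‖ with hg
      have hgc : ContinuousOn g UnitDisk := by
        refine hv_cont.mul (ContinuousOn.norm ?_)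
        exact hu.continuousOn.mul
          (((hι_hol f).continuousOn).comp hφ_hol.continuousOn hφ_maps)
      have hsmall : ∀ᶠ z in bdryFilter, g z < 1 :=
        (h2 f).eventually ((Filter.Tendsto.eventually_lt_const zero_lt_one tendsto_id : _))
      obtain ⟨s, hs, hsub⟩ := Filter.mem_comap.mp hsmall
      obtain ⟨l, hl, hIoo⟩ := mem_nhdsLT_iff_exists_Ioo_subset.mp hs
      set r : ℝ := max l 0 with hr
      have hr1 : r < 1 := max_lt hl zero_lt_one
      have hK : IsCompact (Metric.closedBall (0 : ℂ) r) := isCompact_closedBall _ _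
      have hKsub : Metric.closedBall (0 : ℂ) r ⊆ UnitDisk := by
        intro z hz
        exact mem_ball_zero_iff.mpr (lt_of_le_of_lt (mem_closedBall_zero_iff.mp hz) hr1)
      obtain ⟨M, hM⟩ := hK.exists_bound_of_continuousOn (hgc.mono hKsub)
      refine ⟨max M 1, ?_⟩
      rintro ⟨z, hz⟩
      rw [hTf f ⟨z, hz⟩]
      by_cases hzr : ‖z‖ ≤ r
      · have := hM z (mem_closedBall_zero_iff.mpr hzr)
        exact le_trans (le_trans (le_abs_self _) this) (le_max_left _ _)
      · push_neg at hzr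
        have hzl : ‖z‖ ∈ Set.Ioo l 1 :=
          ⟨lt_of_le_of_lt (le_max_left l 0) hzr, mem_ball_zero_iff.mp hz⟩
        have : z ∈ (fun z : ℂ => ‖z‖) ⁻¹' s := hIoo hzl
        exact le_trans (hsub this).le (le_max_right _ _)
    obtain ⟨C, hC⟩ := banach_steinhaus hpt
    refine ⟨max C 0, le_max_right _ _, ?_⟩
    intro f z hz
    have h1 : v z * ‖u z * ι f (φ z)‖ = ‖T ⟨z, hz⟩ f‖ := (hTf f ⟨z, hz⟩).symm
    rw [h1]
    calc ‖T ⟨z, hz⟩ f‖ ≤ ‖T ⟨z, hz⟩‖ * ‖f‖ := (T ⟨z, hz⟩).le_opNorm f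
      _ ≤ C * ‖f‖ := by gcongr; exact hC ⟨z, hz⟩
      _ ≤ max C 0 * ‖f‖ := by gcongr; exact le_max_left _ _
end

section
/- Let T be an intrinsic operator, X an initial space, and suppose T : X → H_v is bounded. Then T : X → H_v is compact if and only if the set {v(z)·T* K_z : z ∈ D} is relatively norm-compact in X*, where K_z is the point evaluation functional on H_v. -/
open Metric Filter Topology

set_option maxHeartbeats 2000000 in
/-- Let `T` be an intrinsic operator, `X` an initial space, and suppose
`T : X → H_v` is bounded (realized by `S : X →L[ℂ] Hv`, where `Hv` is the growth space
`H_v` realized abstractly).  Then `T : X → H_v` is compact iff the set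
`{v z • T* K_z : z ∈ 𝔻}` is relatively norm-compact in `X*`. -/
theorem stmt_12 {X Hv : Type*}
    [NormedAddCommGroup X] [NormedSpace ℂ X] [CompleteSpace X]
    [NormedAddCommGroup Hv] [NormedSpace ℂ Hv] [CompleteSpace Hv]
    (v : ℂ → ℝ)
    (hv_cont : ContinuousOn v UnitDisk)
    (hv_pos : ∀ z ∈ UnitDisk, 0 < v z)
    (hv_le1 : ∀ z ∈ UnitDisk, v z ≤ 1)
    (hv_rad : ∀ z ∈ UnitDisk, ∀ w ∈ UnitDisk, ‖z‖ = ‖w‖ → v z = v w)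
    (ιX : X →ₗ[ℂ] (ℂ → ℂ)) (hιX_inj : Function.Injective ιX)
    (hιX_hol : ∀ f : X, DifferentiableOn ℂ (ιX f) UnitDisk)
    (hX_poly : ∀ q : Polynomial ℂ, ∃ f : X, ∀ z ∈ UnitDisk, ιX f z = q.eval z)
    (hX_ball : ∀ u : ℕ → X, (∀ n, ‖u n‖ ≤ 1) →
      ∃ (f : X) (σ : ℕ → ℕ), StrictMono σ ∧ ‖f‖ ≤ 1 ∧
        TendstoLocallyUniformlyOn (fun k => ιX (u (σ k))) (ιX f) atTop UnitDisk)
    (j : Hv →ₗ[ℂ] (ℂ → ℂ)) (hj_inj : Function.Injective j)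
    (hj_hol : ∀ g : Hv, DifferentiableOn ℂ (j g) UnitDisk)
    (hj_le : ∀ (g : Hv), ∀ z ∈ UnitDisk, v z * ‖j g z‖ ≤ ‖g‖)
    (hj_norm : ∀ (g : Hv) (C : ℝ), 0 ≤ C → (∀ z ∈ UnitDisk, v z * ‖j g z‖ ≤ C) → ‖g‖ ≤ C)
    (hj_surj : ∀ f : ℂ → ℂ, DifferentiableOn ℂ f UnitDisk →
      (∃ C : ℝ, ∀ z ∈ UnitDisk, v z * ‖f z‖ ≤ C) → ∃ g : Hv, ∀ z ∈ UnitDisk, j g z = f z)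
    (K : ℂ → (Hv →L[ℂ] ℂ)) (hK : ∀ z ∈ UnitDisk, ∀ g : Hv, K z g = j g z)
    (T : (ℂ → ℂ) →ₗ[ℂ] (ℂ → ℂ))
    (hT_hol : ∀ f : ℂ → ℂ, DifferentiableOn ℂ f UnitDisk →
      DifferentiableOn ℂ (T f) UnitDisk)
    (hT_intr : ∀ (F : ℕ → (ℂ → ℂ)) (f : ℂ → ℂ),
      (∀ n, DifferentiableOn ℂ (F n) UnitDisk) → DifferentiableOn ℂ f UnitDisk →
      TendstoLocallyUniformlyOn F f atTop UnitDisk →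
      TendstoLocallyUniformlyOn (fun n => T (F n)) (T f) atTop UnitDisk)
    (S : X →L[ℂ] Hv) (hS : ∀ f : X, ∀ z ∈ UnitDisk, j (S f) z = T (ιX f) z) :
    IsCompactOperator S ↔
      IsCompact (closure ((fun z => ((v z : ℂ) • (K z).comp S : X →L[ℂ] ℂ)) '' UnitDisk)) := by
  set Φ : ℂ → (X →L[ℂ] ℂ) := fun z => ((v z : ℂ) • (K z).comp S : X →L[ℂ] ℂ) with hΦdef
  set ψ : ℂ → (Hv →L[ℂ] ℂ) := fun z => ((v z : ℂ) • K z : Hv →L[ℂ] ℂ) with hψdef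
  have hΦψ : ∀ z : ℂ, ∀ x : X, Φ z x = ψ z (S x) := fun z x => rfl
  -- norm of ψ z g
  have hψnorm : ∀ z ∈ UnitDisk, ∀ g : Hv, ‖ψ z g‖ = v z * ‖j g z‖ := by
    intro z hz g
    have : ψ z g = (v z : ℂ) • (K z g) := rfl
    rw [this, hK z hz g, norm_smul, Complex.norm_real, Real.norm_eq_abs,
      abs_of_pos (hv_pos z hz)]
  have hψle : ∀ z ∈ UnitDisk, ∀ g : Hv, ‖ψ z g‖ ≤ ‖g‖ := by
    intro z hz g
    rw [hψnorm z hz g]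
    exact hj_le g z hz
  have hΦT : ∀ z ∈ UnitDisk, ∀ x : X, Φ z x = (v z : ℂ) * (T (ιX x) z) := by
    intro z hz x
    rw [hΦψ z x]
    have : ψ z (S x) = (v z : ℂ) • (K z (S x)) := rfl
    rw [this, hK z hz (S x), hS x z hz, smul_eq_mul]
  constructor
  · -- compact operator ⇒ relatively compact set of functionals
    intro hSc
    have hM : IsCompact (closure (⇑S '' Metric.ball 0 1)) :=
      IsCompactOperator.isCompact_closure_image_ball (f := (S : X →ₗ[ℂ] Hv)) hSc 1
    refine TotallyBounded.isCompact_of_isClosed ?_ isClosed_closure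
    refine TotallyBounded.closure ?_
    rw [totallyBounded_iff]
    intro ε hε
    -- finite ε/8-net of the compact image
    obtain ⟨t, htfin, htcov⟩ :=
      totallyBounded_iff.1 hM.totallyBounded (ε / 8) (by positivity)
    haveI : Fintype ↥t := htfin.fintype
    -- the map recording the values of ψ z on the net
    set G : ℂ → (↥t → ℂ) := fun z => fun g => ψ z (g : Hv) with hGdef
    -- G '' UnitDisk is bounded, hence totally bounded
    set C : ℝ := (∑ g : ↥t, ‖(g : Hv)‖) + 1 with hCdef
    have hC0 : 0 ≤ C := by positivity
    have hGmem : ∀ z ∈ UnitDisk, G z ∈ Metric.closedBall (0 : ↥t → ℂ) C := by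
      intro z hz
      rw [mem_closedBall_zero_iff]
      refine (pi_norm_le_iff_of_nonneg hC0).2 fun g => ?_
      refine (hψle z hz (g : Hv)).trans ?_
      have h1 : ‖(g : Hv)‖ ≤ ∑ g : ↥t, ‖(g : Hv)‖ :=
        Finset.single_le_sum (fun i _ => norm_nonneg _) (Finset.mem_univ g)
      linarith
    have hGtb : TotallyBounded (G '' UnitDisk) := by
      refine TotallyBounded.subset ?_ (isCompact_closedBall (0 : ↥t → ℂ) C).totallyBounded
      rintro - ⟨z, hz, rfl⟩
      exact hGmem z hz
    -- finite net of points of G '' UnitDisk itself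
    obtain ⟨F, hFsub, hFfin, hFcov⟩ :=
      totallyBounded_iff_subset.1 hGtb _ (Metric.dist_mem_uniformity (show (0:ℝ) < ε/8 by positivity))
    haveI : Finite ↥F := hFfin.to_subtype
    choose w hwD hwG using fun y : ↥F => hFsub y.2
    refine ⟨(fun y : ↥F => Φ (w y)) '' Set.univ, (Set.finite_univ.image _), ?_⟩
    rintro - ⟨z, hz, rfl⟩
    obtain ⟨y, hyF, hy⟩ := Set.mem_iUnion₂.1 (hFcov ⟨z, hz, rfl⟩)
    have hy' : dist (G z) (G (w ⟨y, hyF⟩)) < ε / 8 := by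
      rw [hwG ⟨y, hyF⟩]; exact hy
    refine Set.mem_iUnion₂.2 ⟨Φ (w ⟨y, hyF⟩), ⟨⟨y, hyF⟩, Set.mem_univ _, rfl⟩, ?_⟩
    -- show ‖Φ z - Φ (w y)‖ < ε
    set w' : ℂ := w ⟨y, hyF⟩ with hw'def
    have hw'D : w' ∈ UnitDisk := hwD ⟨y, hyF⟩
    rw [mem_ball_iff_norm]
    have hbound : ∀ x ∈ Metric.ball (0 : X) 1, ‖(Φ z - Φ w') x‖ ≤ 3 * (ε / 8) := by
      intro x hx
      have hSx : S x ∈ closure (⇑S '' Metric.ball 0 1) :=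
        subset_closure ⟨x, hx, rfl⟩
      obtain ⟨g, hgt, hgball⟩ := Set.mem_iUnion₂.1 (htcov hSx)
      have hgdist : ‖S x - g‖ < ε / 8 := mem_ball_iff_norm.1 hgball
      have e1 : ‖ψ z (S x) - ψ z g‖ ≤ ε / 8 := by
        rw [← map_sub]
        exact (hψle z hz _).trans hgdist.le
      have e3 : ‖ψ w' g - ψ w' (S x)‖ ≤ ε / 8 := by
        rw [← map_sub]
        refine (hψle w' hw'D _).trans ?_
        rw [norm_sub_rev]; exact hgdist.le
      have e2 : ‖ψ z g - ψ w' g‖ ≤ ε / 8 := by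
        have := dist_le_pi_dist (G z) (G w') ⟨g, hgt⟩
        have h2 : dist (ψ z g) (ψ w' g) ≤ dist (G z) (G w') := this
        rw [dist_eq_norm] at h2
        exact h2.trans hy'.le
      have : (Φ z - Φ w') x = (ψ z (S x) - ψ z g) + (ψ z g - ψ w' g) + (ψ w' g - ψ w' (S x)) := by
        simp only [ContinuousLinearMap.sub_apply, hΦψ]
        ring
      rw [this]
      calc ‖(ψ z (S x) - ψ z g) + (ψ z g - ψ w' g) + (ψ w' g - ψ w' (S x))‖
          ≤ ‖(ψ z (S x) - ψ z g) + (ψ z g - ψ w' g)‖ + ‖ψ w' g - ψ w' (S x)‖ := norm_add_le _ _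
        _ ≤ ‖ψ z (S x) - ψ z g‖ + ‖ψ z g - ψ w' g‖ + ‖ψ w' g - ψ w' (S x)‖ := by
            have := norm_add_le (ψ z (S x) - ψ z g) (ψ z g - ψ w' g); linarith
        _ ≤ 3 * (ε / 8) := by linarith
    have h2n : (1:ℝ) < ‖(2:ℂ)‖ := by
      rw [Complex.norm_ofNat]; norm_num
    have hop : ‖Φ z - Φ w'‖ ≤ 3 * (ε / 4) := by
      refine ContinuousLinearMap.opNorm_le_of_shell (f := Φ z - Φ w') one_pos
        (by positivity) h2n ?_
      intro x hx1 hx2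
      have hb := hbound x (mem_ball_zero_iff.2 hx2)
      have hx' : (1:ℝ)/2 ≤ ‖x‖ := by
        rw [Complex.norm_ofNat] at hx1
        linarith [hx1]
      nlinarith [hb, hx', hε]
    linarith
  · -- relatively compact set of functionals ⇒ compact operator
    intro hcl
    have hTB : TotallyBounded (Φ '' UnitDisk) :=
      hcl.totallyBounded.subset subset_closure
    -- show the closure of the image of the unit ball is (sequentially) compact
    have hseq : IsSeqCompact (closure (⇑S '' Metric.ball 0 1)) := by
      intro x hx
      have hex : ∀ n : ℕ, ∃ u : X, u ∈ Metric.ball (0 : X) 1 ∧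
          dist (x n) (S u) < 1 / (n + 1) := by
        intro n
        obtain ⟨b, hb, hd⟩ := Metric.mem_closure_iff.1 (hx n) (1 / (n + 1)) (by positivity)
        obtain ⟨u, hu, rfl⟩ := hb
        exact ⟨u, hu, hd⟩
      choose u hu hud using hex
      have hu1 : ∀ n, ‖u n‖ ≤ 1 := fun n => (mem_ball_zero_iff.1 (hu n)).le
      obtain ⟨f, σ, hσ, hf1, hTLU⟩ := hX_ball u hu1
      have hTLU2 : TendstoLocallyUniformlyOn (fun k => T (ιX (u (σ k)))) (T (ιX f))
          atTop UnitDisk :=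
        hT_intr _ _ (fun k => hιX_hol _) (hιX_hol f) hTLU
      -- main convergence claim
      have hmain : Tendsto (fun k => S (u (σ k))) atTop (𝓝 (S f)) := by
        rw [Metric.tendsto_atTop]
        intro ε hε
        -- finite net of the functionals, from total boundedness
        obtain ⟨t, htsub, htfin, htcov⟩ := totallyBounded_iff_subset.1 hTB _
          (Metric.dist_mem_uniformity (show (0:ℝ) < ε/8 by positivity))
        haveI : Finite ↥t := htfin.to_subtype
        choose w hwD hwΦ using fun y : ↥t => htsub y.2
        -- pointwise convergence of each Φ (w y)
        have hpt : ∀ y : ↥t, Tendsto (fun k => Φ (w y) (u (σ k))) atTop (𝓝 (Φ (w y) f)) := by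
          intro y
          have h1 : Tendsto (fun k => T (ιX (u (σ k))) (w y)) atTop (𝓝 (T (ιX f) (w y))) :=
            hTLU2.tendsto_at (hwD y)
          have h2 : Tendsto (fun k => (v (w y) : ℂ) * T (ιX (u (σ k))) (w y)) atTop
              (𝓝 ((v (w y) : ℂ) * T (ιX f) (w y))) := h1.const_mul _
          simpa only [hΦT (w y) (hwD y)] using h2
        have hev : ∀ᶠ k in atTop, ∀ y : ↥t,
            ‖Φ (w y) (u (σ k)) - Φ (w y) f‖ < ε / 8 := by
          rw [eventually_all]
          intro y
          have h3 := Metric.tendsto_nhds.1 (hpt y) (ε / 8) (by positivity)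
          simpa [dist_eq_norm] using h3
        obtain ⟨N, hN⟩ := Filter.eventually_atTop.1 hev
        refine ⟨N, fun k hk => ?_⟩
        have key : ∀ z ∈ UnitDisk, v z * ‖j (S (u (σ k)) - S f) z‖ ≤ ε / 2 := by
          intro z hz
          have h1 : S (u (σ k)) - S f = S (u (σ k) - f) := (map_sub S _ _).symm
          have h2 : v z * ‖j (S (u (σ k) - f)) z‖ = ‖Φ z (u (σ k) - f)‖ := by
            rw [hΦψ, hψnorm z hz]
          obtain ⟨y0, hy0t, hy0⟩ := Set.mem_iUnion₂.1 (htcov ⟨z, hz, rfl⟩)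
          have hnear : ‖Φ z - Φ (w ⟨y0, hy0t⟩)‖ < ε / 8 := by
            have h4 : dist (Φ z) (Φ (w ⟨y0, hy0t⟩)) < ε / 8 := by
              rw [hwΦ ⟨y0, hy0t⟩]; exact hy0
            rwa [dist_eq_norm] at h4
          have hdiff : ‖u (σ k) - f‖ ≤ 2 := by
            calc ‖u (σ k) - f‖ ≤ ‖u (σ k)‖ + ‖f‖ := norm_sub_le _ _
              _ ≤ 2 := by linarith [hu1 (σ k)]
          have hsplit : ‖Φ z (u (σ k) - f)‖ ≤
              ‖(Φ z - Φ (w ⟨y0, hy0t⟩)) (u (σ k) - f)‖ + ‖Φ (w ⟨y0, hy0t⟩) (u (σ k) - f)‖ := by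
            have h5 : Φ z (u (σ k) - f) = (Φ z - Φ (w ⟨y0, hy0t⟩)) (u (σ k) - f)
                + Φ (w ⟨y0, hy0t⟩) (u (σ k) - f) := by
              simp [ContinuousLinearMap.sub_apply]
            rw [h5]; exact norm_add_le _ _
          have hb1 : ‖(Φ z - Φ (w ⟨y0, hy0t⟩)) (u (σ k) - f)‖ ≤ ε / 8 * 2 :=
            le_trans ((Φ z - Φ (w ⟨y0, hy0t⟩)).le_opNorm _)
              (mul_le_mul hnear.le hdiff (norm_nonneg _) (by positivity))
          have hb2 : ‖Φ (w ⟨y0, hy0t⟩) (u (σ k) - f)‖ < ε / 8 := by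
            have h6 := hN k hk ⟨y0, hy0t⟩
            rwa [← map_sub] at h6
          rw [h1, h2]
          linarith
        have h7 : ‖S (u (σ k)) - S f‖ ≤ ε / 2 :=
          hj_norm _ _ (by positivity) key
        rw [dist_eq_norm]
        linarith
      -- conclude sequential compactness
      have hxd : Tendsto (fun k => dist (x (σ k)) (S (u (σ k)))) atTop (𝓝 0) := by
        have h0 : ∀ k, dist (x (σ k)) (S (u (σ k))) ≤ 1 / (k + 1) := by
          intro k
          refine (hud (σ k)).le.trans ?_
          have hk1 : (0 : ℝ) < (k : ℝ) + 1 := by positivity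
          have hk2 : ((k : ℝ) + 1) ≤ ((σ k : ℕ) : ℝ) + 1 := by
            have h8 : k ≤ σ k := hσ.le_apply
            have h9 : ((k : ℕ) : ℝ) ≤ ((σ k : ℕ) : ℝ) := Nat.cast_le.2 h8
            push_cast
            linarith
          exact one_div_le_one_div_of_le hk1 hk2
        exact squeeze_zero (fun k => dist_nonneg) h0 tendsto_one_div_add_atTop_nhds_zero_nat
      refine ⟨S f, ?_, σ, hσ, ?_⟩
      · exact isClosed_closure.mem_of_tendsto hmain
          (Filter.Eventually.of_forall fun k => subset_closure ⟨u (σ k), hu _, rfl⟩)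
      · exact Filter.Tendsto.congr_dist hmain (by simpa [dist_comm] using hxd)
    have hcomp : IsCompact (closure (⇑S '' Metric.ball 0 1)) := hseq.isCompact
    exact ⟨closure (⇑S '' Metric.ball 0 1), hcomp,
      Filter.mem_of_superset (Metric.ball_mem_nhds 0 one_pos)
        fun x hx => subset_closure ⟨x, hx, rfl⟩⟩
end

section
/- Let T be an intrinsic operator, X an initial space, v a typical weight, and suppose T : X → H_{v,0} is bounded. Then T : X → H_{v,0} is compact if and only if lim_{|z|→1} v(z)·||T* K_z||_{X*} = 0. -/
open Metric Filter Topology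

private lemma eventually_bdry_of {p : ℂ → Prop} {r : ℝ} (hr : r < 1)
    (h : ∀ z : ℂ, r < ‖z‖ → ‖z‖ < 1 → p z) : ∀ᶠ z in bdryFilter, p z := by
  rw [bdryFilter, eventually_comap]
  filter_upwards [Ioo_mem_nhdsLT_of_mem (Set.mem_Ioc.mpr ⟨hr, le_refl (1:ℝ)⟩)] with x hx z hz
  exact h z (hz ▸ hx.1) (hz ▸ hx.2)

private lemma exists_r_of_eventually_bdry {p : ℂ → Prop} (h : ∀ᶠ z in bdryFilter, p z) :
    ∃ r : ℝ, r < 1 ∧ ∀ z : ℂ, r < ‖z‖ → ‖z‖ < 1 → p z := by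
  rw [bdryFilter, eventually_comap] at h
  obtain ⟨l, hl, hsub⟩ := mem_nhdsLT_iff_exists_Ioo_subset.mp h
  exact ⟨l, hl, fun z h1 h2 => hsub ⟨h1, h2⟩ z rfl⟩

/-- Let `T` be an intrinsic operator, `X` an initial space, `v` a typical
weight, and suppose `T : X → H_{v,0}` is bounded (realized by `S : X →L[ℂ] Hv` whose range
lies in `H_{v,0}`).  Then `T : X → H_{v,0}` is compact iff
`lim_{|z| → 1} v z * ‖T* K_z‖_{X*} = 0`. -/
theorem stmt_13 {X Hv : Type*}
    [NormedAddCommGroup X] [NormedSpace ℂ X] [CompleteSpace X]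
    [NormedAddCommGroup Hv] [NormedSpace ℂ Hv] [CompleteSpace Hv]
    (v : ℂ → ℝ)
    (hv_cont : ContinuousOn v UnitDisk)
    (hv_pos : ∀ z ∈ UnitDisk, 0 < v z)
    (hv_le1 : ∀ z ∈ UnitDisk, v z ≤ 1)
    (hv_rad : ∀ z ∈ UnitDisk, ∀ w ∈ UnitDisk, ‖z‖ = ‖w‖ → v z = v w)
    (hv_mono : ∀ z ∈ UnitDisk, ∀ w ∈ UnitDisk, ‖z‖ ≤ ‖w‖ → v w ≤ v z)
    (hv_lim : Tendsto v bdryFilter (nhds 0))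
    (ιX : X →ₗ[ℂ] (ℂ → ℂ)) (hιX_inj : Function.Injective ιX)
    (hιX_hol : ∀ f : X, DifferentiableOn ℂ (ιX f) UnitDisk)
    (hX_poly : ∀ q : Polynomial ℂ, ∃ f : X, ∀ z ∈ UnitDisk, ιX f z = q.eval z)
    (hX_ball : ∀ u : ℕ → X, (∀ n, ‖u n‖ ≤ 1) →
      ∃ (f : X) (σ : ℕ → ℕ), StrictMono σ ∧ ‖f‖ ≤ 1 ∧
        TendstoLocallyUniformlyOn (fun k => ιX (u (σ k))) (ιX f) atTop UnitDisk)
    (j : Hv →ₗ[ℂ] (ℂ → ℂ)) (hj_inj : Function.Injective j)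
    (hj_hol : ∀ g : Hv, DifferentiableOn ℂ (j g) UnitDisk)
    (hj_le : ∀ (g : Hv), ∀ z ∈ UnitDisk, v z * ‖j g z‖ ≤ ‖g‖)
    (hj_norm : ∀ (g : Hv) (C : ℝ), 0 ≤ C → (∀ z ∈ UnitDisk, v z * ‖j g z‖ ≤ C) → ‖g‖ ≤ C)
    (hj_surj : ∀ f : ℂ → ℂ, DifferentiableOn ℂ f UnitDisk →
      (∃ C : ℝ, ∀ z ∈ UnitDisk, v z * ‖f z‖ ≤ C) → ∃ g : Hv, ∀ z ∈ UnitDisk, j g z = f z)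
    (K : ℂ → (Hv →L[ℂ] ℂ)) (hK : ∀ z ∈ UnitDisk, ∀ g : Hv, K z g = j g z)
    (T : (ℂ → ℂ) →ₗ[ℂ] (ℂ → ℂ))
    (hT_hol : ∀ f : ℂ → ℂ, DifferentiableOn ℂ f UnitDisk →
      DifferentiableOn ℂ (T f) UnitDisk)
    (hT_intr : ∀ (F : ℕ → (ℂ → ℂ)) (f : ℂ → ℂ),
      (∀ n, DifferentiableOn ℂ (F n) UnitDisk) → DifferentiableOn ℂ f UnitDisk →
      TendstoLocallyUniformlyOn F f atTop UnitDisk →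
      TendstoLocallyUniformlyOn (fun n => T (F n)) (T f) atTop UnitDisk)
    (S : X →L[ℂ] Hv) (hS : ∀ f : X, ∀ z ∈ UnitDisk, j (S f) z = T (ιX f) z)
    (hS0 : ∀ f : X, Tendsto (fun z => v z * ‖j (S f) z‖) bdryFilter (nhds 0)) :
    IsCompactOperator S ↔
      Tendsto (fun z => v z * ‖(K z).comp S‖) bdryFilter (nhds 0) := by
  constructor
  · intro hcpt
    rw [Metric.tendsto_nhds]
    intro ε hε
    have hc : IsCompact (closure (S '' Metric.closedBall (0 : X) 1)) :=
      IsCompactOperator.isCompact_closure_image_closedBall (𝕜₁ := ℂ)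
        (f := (S : X →ₗ[ℂ] Hv)) hcpt 1
    have htb : TotallyBounded (S '' Metric.closedBall (0 : X) 1) :=
      hc.totallyBounded.subset subset_closure
    obtain ⟨t, hts, htf, hcover⟩ := totallyBounded_iff_subset.mp htb
      {q : Hv × Hv | dist q.1 q.2 < ε / 4} (dist_mem_uniformity (by positivity))
    have hev : ∀ᶠ z in bdryFilter, ∀ y ∈ t, v z * ‖j y z‖ < ε / 4 := by
      rw [eventually_all_finite htf]
      intro y hy
      obtain ⟨f0, _, rfl⟩ := hts hy
      exact (hS0 f0).eventually_lt_const (by positivity)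
    have hevD : ∀ᶠ z in bdryFilter, z ∈ UnitDisk := by
      refine eventually_bdry_of (r := 0) one_pos (fun z _ hz => ?_)
      exact mem_ball_zero_iff.mpr hz
    filter_upwards [hev, hevD] with z hz hzD
    have hv0 : 0 < v z := hv_pos z hzD
    have hb1 : ∀ f : X, ‖f‖ ≤ 1 → v z * ‖K z (S f)‖ ≤ ε / 2 := by
      intro f hf
      obtain ⟨y, hyt, hyd⟩ := Set.mem_iUnion₂.mp
        (hcover ⟨f, mem_closedBall_zero_iff.mpr hf, rfl⟩)
      have hdist : ‖S f - y‖ < ε / 4 := by rw [← dist_eq_norm]; exact hyd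
      have hsplit : j (S f) z = j (S f - y) z + j y z := by
        have h' : j (S f - y) = j (S f) - j y := map_sub j _ _
        rw [h', Pi.sub_apply]; ring
      calc v z * ‖K z (S f)‖ = v z * ‖j (S f) z‖ := by rw [hK z hzD]
        _ = v z * ‖j (S f - y) z + j y z‖ := by rw [← hsplit]
        _ ≤ v z * (‖j (S f - y) z‖ + ‖j y z‖) :=
            mul_le_mul_of_nonneg_left (norm_add_le _ _) hv0.le
        _ = v z * ‖j (S f - y) z‖ + v z * ‖j y z‖ := mul_add _ _ _
        _ ≤ ‖S f - y‖ + v z * ‖j y z‖ := add_le_add_left (hj_le _ z hzD) _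
        _ ≤ ε / 4 + ε / 4 := add_le_add hdist.le (hz y hyt).le
        _ = ε / 2 := by ring
    have hb2 : ‖(K z).comp S‖ ≤ ε / 2 / v z := by
      apply ContinuousLinearMap.opNorm_le_bound _ (by positivity)
      intro f
      rcases eq_or_ne f 0 with rfl | hf0
      · simp
      · have hn : (0 : ℝ) < ‖f‖ := norm_pos_iff.mpr hf0
        have hset : ‖((‖f‖ : ℂ)⁻¹ • f)‖ ≤ 1 := by
          rw [norm_smul, norm_inv, Complex.norm_real, Real.norm_eq_abs, abs_of_nonneg hn.le]
          rw [inv_mul_cancel₀ hn.ne']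
        have h1 := hb1 _ hset
        have h3 : ‖K z (S ((‖f‖ : ℂ)⁻¹ • f))‖ = ‖f‖⁻¹ * ‖K z (S f)‖ := by
          rw [map_smul, map_smul, norm_smul, norm_inv, Complex.norm_real,
            Real.norm_eq_abs, abs_of_nonneg hn.le]
        rw [h3] at h1
        have hX : ‖f‖⁻¹ * ‖K z (S f)‖ ≤ ε / 2 / v z := (le_div_iff₀' hv0).mpr h1
        calc ‖((K z).comp S) f‖ = ‖K z (S f)‖ := rfl
          _ = (‖f‖⁻¹ * ‖K z (S f)‖) * ‖f‖ := by field_simp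
          _ ≤ (ε / 2 / v z) * ‖f‖ := mul_le_mul_of_nonneg_right hX hn.le
    have hfin : v z * ‖(K z).comp S‖ ≤ ε / 2 := by
      calc v z * ‖(K z).comp S‖ ≤ v z * (ε / 2 / v z) :=
          mul_le_mul_of_nonneg_left hb2 hv0.le
        _ = ε / 2 := by field_simp
    rw [Real.dist_eq, sub_zero, abs_of_nonneg (by positivity)]
    linarith
  · intro hlim
    have key : ∀ u : ℕ → X, (∀ n, ‖u n‖ ≤ 1) →
        ∃ g ∈ S '' Metric.closedBall (0 : X) 1, ∃ σ : ℕ → ℕ, StrictMono σ ∧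
          Tendsto (fun k => S (u (σ k))) atTop (𝓝 g) := by
      intro u hu
      obtain ⟨f, σ, hσ, hf1, htlu⟩ := hX_ball u hu
      refine ⟨S f, ⟨f, mem_closedBall_zero_iff.mpr hf1, rfl⟩, σ, hσ, ?_⟩
      have htlu2 : TendstoLocallyUniformlyOn
          (fun k => j (S (u (σ k)))) (j (S f)) atTop UnitDisk := by
        have h1 := hT_intr (fun k => ιX (u (σ k))) (ιX f)
          (fun k => hιX_hol _) (hιX_hol f) htlu
        refine (h1.congr ?_).congr_right ?_
        · intro k z hz; exact (hS (u (σ k)) z hz).symm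
        · intro z hz; exact (hS f z hz).symm
      rw [NormedAddCommGroup.tendsto_atTop]
      intro ε hε
      obtain ⟨r0, hr0, hbd⟩ := exists_r_of_eventually_bdry
        (hlim.eventually_lt_const (show (0:ℝ) < ε / 8 by positivity))
      have hK0sub : Metric.closedBall (0 : ℂ) r0 ⊆ UnitDisk := fun z hz =>
        mem_ball_zero_iff.mpr (lt_of_le_of_lt (mem_closedBall_zero_iff.mp hz) hr0)
      have hunif := (tendstoLocallyUniformlyOn_iff_forall_isCompact
        (isOpen_ball : IsOpen UnitDisk)).mp htlu2 (Metric.closedBall 0 r0) hK0sub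
        (isCompact_closedBall 0 r0)
      rw [Metric.tendstoUniformlyOn_iff] at hunif
      obtain ⟨N, hN⟩ := eventually_atTop.mp (hunif (ε / 4) (by positivity))
      refine ⟨N, fun k hk => ?_⟩
      have hnorm : ‖S (u (σ k)) - S f‖ ≤ ε / 2 := by
        apply hj_norm _ _ (by positivity)
        intro z hz
        have hz1 : ‖z‖ < 1 := mem_ball_zero_iff.mp hz
        have hv0 : 0 < v z := hv_pos z hz
        have hjsub : j (S (u (σ k)) - S f) z = j (S (u (σ k))) z - j (S f) z := by
          have h' : j (S (u (σ k)) - S f) = j (S (u (σ k))) - j (S f) := map_sub j _ _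
          rw [h', Pi.sub_apply]
        by_cases hcase : r0 < ‖z‖
        · have hb := hbd z hcase hz1
          have e1 : ((K z).comp S) (u (σ k) - f) = j (S (u (σ k)) - S f) z := by
            rw [ContinuousLinearMap.comp_apply, map_sub S]
            exact hK z hz _
          have e2 : ‖((K z).comp S) (u (σ k) - f)‖ ≤ ‖(K z).comp S‖ * 2 := by
            calc ‖((K z).comp S) (u (σ k) - f)‖ ≤ ‖(K z).comp S‖ * ‖u (σ k) - f‖ :=
                ContinuousLinearMap.le_opNorm _ _
              _ ≤ ‖(K z).comp S‖ * 2 := by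
                  apply mul_le_mul_of_nonneg_left _ (norm_nonneg _)
                  calc ‖u (σ k) - f‖ ≤ ‖u (σ k)‖ + ‖f‖ := norm_sub_le _ _
                    _ ≤ 1 + 1 := add_le_add (hu _) hf1
                    _ = 2 := by norm_num
          calc v z * ‖j (S (u (σ k)) - S f) z‖
              = v z * ‖((K z).comp S) (u (σ k) - f)‖ := by rw [e1]
            _ ≤ v z * (‖(K z).comp S‖ * 2) :=
                mul_le_mul_of_nonneg_left e2 hv0.le
            _ = (v z * ‖(K z).comp S‖) * 2 := by ring
            _ ≤ (ε / 8) * 2 := mul_le_mul_of_nonneg_right hb.le (by norm_num)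
            _ ≤ ε / 2 := by linarith
        · push_neg at hcase
          have hzK : z ∈ Metric.closedBall (0 : ℂ) r0 := mem_closedBall_zero_iff.mpr hcase
          have hd := hN k hk z hzK
          have hlt : ‖j (S (u (σ k))) z - j (S f) z‖ < ε / 4 := by
            rw [← dist_eq_norm, dist_comm]; exact hd
          calc v z * ‖j (S (u (σ k)) - S f) z‖
              ≤ ‖j (S (u (σ k)) - S f) z‖ :=
                mul_le_of_le_one_left (norm_nonneg _) (hv_le1 z hz)
            _ = ‖j (S (u (σ k))) z - j (S f) z‖ := by rw [hjsub]
            _ ≤ ε / 2 := by linarith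
      have : ‖S (u (σ k)) - S f‖ < ε := lt_of_le_of_lt hnorm (by linarith)
      simpa using this
    have hseq : IsSeqCompact (S '' Metric.closedBall (0 : X) 1) := by
      intro x hx
      simp only [Set.mem_image] at hx
      choose u hu1 hu2 using hx
      obtain ⟨g, hg, σ, hσ, htd⟩ := key u (fun n => mem_closedBall_zero_iff.mp (hu1 n))
      refine ⟨g, hg, σ, hσ, ?_⟩
      have hxe : (x ∘ σ) = fun k => S (u (σ k)) := by
        funext k; simp [Function.comp, hu2]
      rw [hxe]
      exact htd
    exact ⟨_, hseq.isCompact, Filter.mem_of_superset (Metric.closedBall_mem_nhds 0 one_pos)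
      (fun f hf => Set.mem_image_of_mem _ hf)⟩
end

section
/- Let X be an initial space such that for every f ∈ X and 0 ≤ r < 1 the dilation f_r(z) = f(rz) lies in X with sup_{0≤r<1} ||f_r||_X ≲ ||f||_X, and let T be an intrinsic operator with Tf_r ∈ H_{v,0} for all f ∈ X and 0 ≤ r < 1. If T : X → H_v is weakly compact, then T maps X into H_{v,0} and T : X → H_{v,0} is bounded. -/
open Metric Filter Topology

private lemma eventually_mem_disk : ∀ᶠ z in bdryFilter, z ∈ UnitDisk := by
  rw [bdryFilter, eventually_comap]
  filter_upwards [self_mem_nhdsWithin] with b hb z hz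
  have : ‖z‖ < 1 := by rw [hz]; exact hb
  simpa [UnitDisk, mem_ball_zero_iff] using this

private lemma isOpen_unitDisk : IsOpen UnitDisk := isOpen_ball

/-- Dilations converge locally uniformly on the disk. -/
private lemma tlu_dilation (f : ℂ → ℂ) (hf : ContinuousOn f UnitDisk) (r : ℕ → ℝ)
    (hr0 : ∀ n, 0 ≤ r n) (hr1 : ∀ n, r n < 1) (hrt : Filter.Tendsto r atTop (nhds 1)) :
    TendstoLocallyUniformlyOn (fun n z => f ((r n : ℂ) * z)) f atTop UnitDisk := by
  rw [tendstoLocallyUniformlyOn_iff_forall_isCompact isOpen_unitDisk]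
  intro K hK hKc
  rcases K.eq_empty_or_nonempty with rfl | hne
  · exact tendstoUniformlyOn_empty
  obtain ⟨x0, hx0K, hx0⟩ := hKc.exists_isMaxOn hne continuous_norm.continuousOn
  set ρ : ℝ := ‖x0‖ with hρdef
  have hρ0 : 0 ≤ ρ := norm_nonneg _
  have hρ1 : ρ < 1 := by
    have := hK hx0K
    simpa [UnitDisk, mem_ball_zero_iff] using this
  set ρ' : ℝ := (1 + ρ) / 2 with hρ'def
  have hρρ' : ρ ≤ ρ' := by simp only [hρ'def]; linarith
  have hρ'1 : ρ' < 1 := by simp only [hρ'def]; linarith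
  have hsub : Metric.closedBall (0 : ℂ) ρ' ⊆ UnitDisk := by
    simpa [UnitDisk] using closedBall_subset_ball hρ'1
  have hcont : ContinuousOn f (Metric.closedBall (0 : ℂ) ρ') := hf.mono hsub
  have huc : UniformContinuousOn f (Metric.closedBall (0 : ℂ) ρ') :=
    (isCompact_closedBall _ _).uniformContinuousOn_of_continuous hcont
  rw [Metric.tendstoUniformlyOn_iff]
  intro ε hε
  rw [Metric.uniformContinuousOn_iff] at huc
  obtain ⟨δ, hδ, hδ'⟩ := huc ε hε
  have h2 : Filter.Tendsto (fun n => 1 - r n) atTop (nhds 0) := by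
    have hone : Filter.Tendsto (fun _ : ℕ => (1:ℝ)) atTop (nhds 1) := tendsto_const_nhds
    simpa using hone.sub hrt
  have hev : ∀ᶠ n in atTop, 1 - r n < δ := h2.eventually_lt_const hδ
  filter_upwards [hev] with n hn z hz
  have hzρ : ‖z‖ ≤ ρ := hx0 hz
  have hzmem : z ∈ Metric.closedBall (0 : ℂ) ρ' := by
    rw [mem_closedBall_zero_iff]; linarith
  have hrzmem : (r n : ℂ) * z ∈ Metric.closedBall (0 : ℂ) ρ' := by
    rw [mem_closedBall_zero_iff, norm_mul, Complex.norm_real]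
    have h1 : |r n| ≤ 1 := by rw [abs_le]; constructor <;> [linarith [hr0 n]; linarith [hr1 n]]
    calc ‖r n‖ * ‖z‖ ≤ 1 * ‖z‖ := by
          exact mul_le_mul_of_nonneg_right (by simpa [Real.norm_eq_abs] using h1) (norm_nonneg _)
      _ ≤ ρ' := by rw [one_mul]; linarith
  have hdist : dist z ((r n : ℂ) * z) < δ := by
    rw [dist_eq_norm]
    have : z - (r n : ℂ) * z = ((1 : ℝ) - r n : ℝ) * z := by push_cast; ring
    rw [this, norm_mul, Complex.norm_real, Real.norm_eq_abs,
      abs_of_nonneg (by linarith [hr1 n] : (0:ℝ) ≤ 1 - r n)]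
    calc (1 - r n) * ‖z‖ ≤ (1 - r n) * 1 := by
          refine mul_le_mul_of_nonneg_left ?_ (by linarith [hr1 n])
          linarith
      _ < δ := by rw [mul_one]; exact hn
  exact hδ' z hzmem ((r n : ℂ) * z) hrzmem hdist

/-- Let `X` be an initial space closed under dilations `f_r(z) = f(rz)` with
`sup_{0 ≤ r < 1} ‖f_r‖_X ≲ ‖f‖_X`, and let `T` be an intrinsic operator with
`T f_r ∈ H_{v,0}` for all `f ∈ X`, `0 ≤ r < 1`.  If `T : X → H_v` (realized by
`S : X →L[ℂ] Hv`) is weakly compact, then `T` maps `X` into `H_{v,0}` (and hence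
`T : X → H_{v,0}` is bounded). -/
theorem stmt_15 {X Hv : Type*}
    [NormedAddCommGroup X] [NormedSpace ℂ X] [CompleteSpace X]
    [NormedAddCommGroup Hv] [NormedSpace ℂ Hv] [CompleteSpace Hv]
    (v : ℂ → ℝ)
    (hv_cont : ContinuousOn v UnitDisk)
    (hv_pos : ∀ z ∈ UnitDisk, 0 < v z)
    (hv_le1 : ∀ z ∈ UnitDisk, v z ≤ 1)
    (hv_rad : ∀ z ∈ UnitDisk, ∀ w ∈ UnitDisk, ‖z‖ = ‖w‖ → v z = v w)
    (hv_mono : ∀ z ∈ UnitDisk, ∀ w ∈ UnitDisk, ‖z‖ ≤ ‖w‖ → v w ≤ v z)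
    (hv_lim : Tendsto v bdryFilter (nhds 0))
    (ιX : X →ₗ[ℂ] (ℂ → ℂ)) (hιX_inj : Function.Injective ιX)
    (hιX_hol : ∀ f : X, DifferentiableOn ℂ (ιX f) UnitDisk)
    (hX_poly : ∀ q : Polynomial ℂ, ∃ f : X, ∀ z ∈ UnitDisk, ιX f z = q.eval z)
    (hX_ball : ∀ u : ℕ → X, (∀ n, ‖u n‖ ≤ 1) →
      ∃ (f : X) (σ : ℕ → ℕ), StrictMono σ ∧ ‖f‖ ≤ 1 ∧
        TendstoLocallyUniformlyOn (fun k => ιX (u (σ k))) (ιX f) atTop UnitDisk)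
    (j : Hv →ₗ[ℂ] (ℂ → ℂ)) (hj_inj : Function.Injective j)
    (hj_hol : ∀ g : Hv, DifferentiableOn ℂ (j g) UnitDisk)
    (hj_le : ∀ (g : Hv), ∀ z ∈ UnitDisk, v z * ‖j g z‖ ≤ ‖g‖)
    (hj_norm : ∀ (g : Hv) (C : ℝ), 0 ≤ C → (∀ z ∈ UnitDisk, v z * ‖j g z‖ ≤ C) → ‖g‖ ≤ C)
    (hj_surj : ∀ f : ℂ → ℂ, DifferentiableOn ℂ f UnitDisk →
      (∃ C : ℝ, ∀ z ∈ UnitDisk, v z * ‖f z‖ ≤ C) → ∃ g : Hv, ∀ z ∈ UnitDisk, j g z = f z)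
    (K : ℂ → (Hv →L[ℂ] ℂ)) (hK : ∀ z ∈ UnitDisk, ∀ g : Hv, K z g = j g z)
    (T : (ℂ → ℂ) →ₗ[ℂ] (ℂ → ℂ))
    (hT_hol : ∀ f : ℂ → ℂ, DifferentiableOn ℂ f UnitDisk →
      DifferentiableOn ℂ (T f) UnitDisk)
    (hT_intr : ∀ (F : ℕ → (ℂ → ℂ)) (f : ℂ → ℂ),
      (∀ n, DifferentiableOn ℂ (F n) UnitDisk) → DifferentiableOn ℂ f UnitDisk →
      TendstoLocallyUniformlyOn F f atTop UnitDisk →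
      TendstoLocallyUniformlyOn (fun n => T (F n)) (T f) atTop UnitDisk)
    (hdil : ∃ c : ℝ, 0 < c ∧ ∀ (f : X) (r : ℝ), 0 ≤ r → r < 1 →
      ∃ fr : X, (∀ z ∈ UnitDisk, ιX fr z = ιX f ((r : ℂ) * z)) ∧ ‖fr‖ ≤ c * ‖f‖)
    (hTr : ∀ (f : X) (r : ℝ), 0 ≤ r → r < 1 →
      Tendsto (fun z => v z * ‖T (fun w => ιX f ((r : ℂ) * w)) z‖) bdryFilter (nhds 0))
    (S : X →L[ℂ] Hv) (hS : ∀ f : X, ∀ z ∈ UnitDisk, j (S f) z = T (ιX f) z)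
    (hwc : IsCompact (closure ((fun f => toWeakSpaceCLM ℂ Hv (S f)) '' Metric.closedBall 0 1))) :
    ∀ f : X, Tendsto (fun z => v z * ‖j (S f) z‖) bdryFilter (nhds 0) := by
  classical
  obtain ⟨c, hc, hdil'⟩ := hdil
  intro f
  -- the subspace H_{v,0}
  have hd : ∀ᶠ z in bdryFilter, z ∈ UnitDisk := eventually_mem_disk
  let M : Submodule ℂ Hv :=
  { carrier := {h | Tendsto (fun z => v z * ‖j h z‖) bdryFilter (nhds 0)}
    zero_mem' := by
      have : (fun z => v z * ‖j (0 : Hv) z‖) = fun _ => (0:ℝ) := by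
        funext z; simp [map_zero]
      simpa [this] using tendsto_const_nhds
    add_mem' := by
      intro h1 h2 hh1 hh2
      refine squeeze_zero' ?_ ?_ (by simpa using hh1.add hh2)
      · filter_upwards [hd] with z hz
        exact mul_nonneg (hv_pos z hz).le (norm_nonneg _)
      · filter_upwards [hd] with z hz
        have : ‖j (h1 + h2) z‖ ≤ ‖j h1 z‖ + ‖j h2 z‖ := by
          rw [map_add]; exact norm_add_le _ _
        calc v z * ‖j (h1 + h2) z‖ ≤ v z * (‖j h1 z‖ + ‖j h2 z‖) :=
              mul_le_mul_of_nonneg_left this (hv_pos z hz).le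
          _ = v z * ‖j h1 z‖ + v z * ‖j h2 z‖ := by ring
    smul_mem' := by
      intro a h hh
      have heq : (fun z => v z * ‖j (a • h) z‖) = fun z => ‖a‖ * (v z * ‖j h z‖) := by
        funext z
        rw [map_smul, Pi.smul_apply, smul_eq_mul, norm_mul]
        ring
      rw [Set.mem_setOf_eq, heq]
      simpa using hh.const_mul ‖a‖ }
  have hMmem : ∀ h : Hv, h ∈ M ↔ Tendsto (fun z => v z * ‖j h z‖) bdryFilter (nhds 0) :=
    fun h => Iff.rfl
  have hMclosed : IsClosed (M : Set Hv) := by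
    refine isClosed_of_closure_subset ?_
    intro h hh
    rw [SetLike.mem_coe, hMmem, Metric.tendsto_nhds]
    intro ε hε
    obtain ⟨h', hh'M, hdist⟩ := Metric.mem_closure_iff.1 hh (ε/2) (by linarith)
    have hh'M' : Tendsto (fun z => v z * ‖j h' z‖) bdryFilter (nhds 0) := hh'M
    have hev := Metric.tendsto_nhds.1 hh'M' (ε/2) (by linarith)
    filter_upwards [hev, hd] with z hz1 hz2
    have hnn : 0 ≤ v z * ‖j h z‖ := mul_nonneg (hv_pos z hz2).le (norm_nonneg _)
    rw [Real.dist_eq, sub_zero, abs_of_nonneg hnn]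
    have h1 : ‖j h z‖ ≤ ‖j (h - h') z‖ + ‖j h' z‖ := by
      have : j h z = j (h - h') z + j h' z := by rw [map_sub, Pi.sub_apply]; ring
      rw [this]; exact norm_add_le _ _
    have h2 : v z * ‖j (h - h') z‖ ≤ ‖h - h'‖ := hj_le _ z hz2
    have h3 : v z * ‖j h' z‖ < ε/2 := by
      have := hz1
      rw [Real.dist_eq, sub_zero] at this
      exact lt_of_le_of_lt (le_abs_self _) this
    have h4 : ‖h - h'‖ < ε/2 := by
      rw [← dist_eq_norm]; exact hdist
    calc v z * ‖j h z‖ ≤ v z * (‖j (h - h') z‖ + ‖j h' z‖) :=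
          mul_le_mul_of_nonneg_left h1 (hv_pos z hz2).le
      _ = v z * ‖j (h - h') z‖ + v z * ‖j h' z‖ := by ring
      _ < ε/2 + ε/2 := add_lt_add (lt_of_le_of_lt h2 h4) h3
      _ = ε := by ring
  -- dilation radii
  set r : ℕ → ℝ := fun n => 1 - 1 / (n + 1) with hrdef
  have hr0 : ∀ n, 0 ≤ r n := by
    intro n
    have h1 : 1 / ((n:ℝ) + 1) ≤ 1 := by
      rw [div_le_one (by positivity)]
      linarith [Nat.cast_nonneg (α := ℝ) n]
    simp only [hrdef]; linarith
  have hr1 : ∀ n, r n < 1 := by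
    intro n
    have h1 : 0 < 1 / ((n:ℝ) + 1) := by positivity
    simp only [hrdef]; linarith
  have hrt : Tendsto r atTop (nhds 1) := by
    have h1 : Tendsto (fun n : ℕ => 1 / ((n : ℝ) + 1)) atTop (nhds 0) :=
      tendsto_one_div_add_atTop_nhds_zero_nat
    have hone : Filter.Tendsto (fun _ : ℕ => (1:ℝ)) atTop (nhds 1) := tendsto_const_nhds
    simpa [hrdef] using hone.sub h1
  choose fr hfr hfrn using fun n => hdil' f (r n) (hr0 n) (hr1 n)
  set a : ℝ := c * ‖f‖ + 1 with hadef
  have ha : 0 < a := by positivity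
  set b : ℂ := (a : ℂ)⁻¹ with hbdef
  have hb0 : b ≠ 0 := by
    simp only [hbdef, ne_eq, inv_eq_zero, Complex.ofReal_eq_zero]
    exact ne_of_gt ha
  have hbnorm : ‖b‖ = a⁻¹ := by
    rw [hbdef, norm_inv, Complex.norm_real, Real.norm_eq_abs, abs_of_pos ha]
  set g : ℕ → X := fun n => b • fr n with hgdef
  have hg : ∀ n, ‖g n‖ ≤ 1 := by
    intro n
    rw [hgdef]
    simp only [norm_smul, hbnorm]
    calc a⁻¹ * ‖fr n‖ ≤ a⁻¹ * (c * ‖f‖) := by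
          exact mul_le_mul_of_nonneg_left (hfrn n) (by positivity)
      _ ≤ a⁻¹ * a := by
          refine mul_le_mul_of_nonneg_left ?_ (by positivity)
          rw [hadef]; linarith
      _ = 1 := by field_simp
  -- the sequence in the weak space
  set seq : ℕ → WeakSpace ℂ Hv := fun n => toWeakSpaceCLM ℂ Hv (S (g n)) with hseqdef
  have hsub : Filter.map seq atTop ≤
      Filter.principal (closure ((fun f => toWeakSpaceCLM ℂ Hv (S f)) '' Metric.closedBall 0 1)) := by
    rw [le_principal_iff, mem_map]
    refine Filter.Eventually.mono (Filter.Eventually.of_forall fun n => ?_) (fun n h => h)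
    exact subset_closure ⟨g n, mem_closedBall_zero_iff.2 (hg n), rfl⟩
  haveI : (Filter.map seq atTop).NeBot := Filter.map_neBot
  obtain ⟨w, hwmem, hw⟩ := hwc.exists_clusterPt hsub
  set w' : Hv := (toWeakSpace ℂ Hv).symm w with hw'def
  -- the dilated functions
  set F : ℕ → ℂ → ℂ := fun n z => ιX f ((r n : ℂ) * z) with hFdef
  have hF_hol : ∀ n, DifferentiableOn ℂ (F n) UnitDisk := by
    intro n
    have hmap : Set.MapsTo (fun z : ℂ => (r n : ℂ) * z) UnitDisk UnitDisk := by
      intro z hz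
      simp only [UnitDisk, mem_ball_zero_iff] at hz ⊢
      rw [norm_mul, Complex.norm_real, Real.norm_eq_abs, abs_of_nonneg (hr0 n)]
      calc r n * ‖z‖ ≤ 1 * ‖z‖ := mul_le_mul_of_nonneg_right (hr1 n).le (norm_nonneg _)
        _ = ‖z‖ := one_mul _
        _ < 1 := hz
    exact (hιX_hol f).comp ((differentiable_const _).mul differentiable_id).differentiableOn hmap
  have htluF : TendstoLocallyUniformlyOn F (ιX f) atTop UnitDisk :=
    tlu_dilation (ιX f) (hιX_hol f).continuousOn r hr0 hr1 hrt
  have htluT : TendstoLocallyUniformlyOn (fun n => T (F n)) (T (ιX f)) atTop UnitDisk :=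
    hT_intr F (ιX f) hF_hol (hιX_hol f) htluF
  have hptw : ∀ z ∈ UnitDisk, Tendsto (fun n => T (F n) z) atTop (nhds (T (ιX f) z)) :=
    fun z hz => htluT.tendsto_at hz
  -- T only depends on values in the disk
  have hagree : ∀ (φ ψ : ℂ → ℂ), DifferentiableOn ℂ φ UnitDisk → DifferentiableOn ℂ ψ UnitDisk →
      (∀ z ∈ UnitDisk, φ z = ψ z) → ∀ z ∈ UnitDisk, T φ z = T ψ z := by
    intro φ ψ hφ hψ heq z hz
    have h1 : TendstoLocallyUniformlyOn (fun _ : ℕ => φ) ψ atTop UnitDisk := by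
      rw [tendstoLocallyUniformlyOn_iff_forall_isCompact isOpen_unitDisk]
      intro Kc hKc _
      rw [Metric.tendstoUniformlyOn_iff]
      intro ε hε
      filter_upwards with n x hx
      rw [heq x (hKc hx)]
      simpa using hε
    have h2 := hT_intr (fun _ => φ) ψ (fun _ => hφ) hψ h1
    exact tendsto_nhds_unique tendsto_const_nhds (h2.tendsto_at hz)
  have hval : ∀ n, ∀ z ∈ UnitDisk, j (S (g n)) z = b * T (F n) z := by
    intro n z hz
    rw [hS (g n) z hz]
    have h1 : ιX (g n) = b • (ιX (fr n)) := by rw [hgdef]; simp [map_smul]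
    rw [h1, map_smul, Pi.smul_apply, smul_eq_mul]
    congr 1
    exact hagree (ιX (fr n)) (F n) (hιX_hol _) (hF_hol n) (hfr n) z hz
  have hKz : ∀ z ∈ UnitDisk,
      Tendsto (fun n => (K z) (S (g n))) atTop (nhds (b * T (ιX f) z)) := by
    intro z hz
    have heq : (fun n => (K z) (S (g n))) = fun n => b * T (F n) z := by
      funext n; rw [hK z hz, hval n z hz]
    rw [heq]
    exact (hptw z hz).const_mul b
  -- cluster point evaluation
  have hclw : ∀ (ℓ : Hv →L[ℂ] ℂ) (L : ℂ),
      Tendsto (fun n => ℓ (S (g n))) atTop (nhds L) → ℓ w' = L := by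
    intro ℓ L hL
    have hcont : Continuous fun x : WeakSpace ℂ Hv => ℓ ((toWeakSpace ℂ Hv).symm x) :=
      WeakBilin.eval_continuous ((topDualPairing ℂ Hv).flip) ℓ
    have hmaple : Tendsto (fun x : WeakSpace ℂ Hv => ℓ ((toWeakSpace ℂ Hv).symm x))
        (Filter.map seq atTop)
        (Filter.map (fun n => ℓ ((toWeakSpace ℂ Hv).symm (seq n))) atTop) := by
      rw [Filter.Tendsto, Filter.map_map]
      exact le_rfl
    have h1 : ClusterPt (ℓ w')
        (Filter.map (fun n => ℓ ((toWeakSpace ℂ Hv).symm (seq n))) atTop) :=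
      hw.map hcont.continuousAt hmaple
    have heq : (fun n => ℓ ((toWeakSpace ℂ Hv).symm (seq n))) = fun n => ℓ (S (g n)) := rfl
    rw [heq] at h1
    have h2 : ClusterPt (ℓ w') (nhds L) := h1.mono hL
    exact t2_iff_nhds.mp inferInstance h2
  -- identification of the cluster point
  have hw_eq : w' = b • (S f) := by
    have key : ∀ z ∈ UnitDisk, j w' z = j (b • S f) z := by
      intro z hz
      have h1 : (K z) w' = b * T (ιX f) z := hclw (K z) _ (hKz z hz)
      rw [← hK z hz w', h1, map_smul, Pi.smul_apply, smul_eq_mul, hS f z hz]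
    have hle : ‖w' - b • S f‖ ≤ 0 := by
      refine hj_norm _ 0 le_rfl fun z hz => ?_
      rw [map_sub, Pi.sub_apply, key z hz, sub_self, norm_zero, mul_zero]
    have := norm_le_zero_iff.mp hle
    exact sub_eq_zero.mp this
  -- membership of the dilated images in M
  have hg_mem : ∀ n, S (g n) ∈ M := by
    intro n
    have h0 := hTr f (r n) (hr0 n) (hr1 n)
    have h1 : Tendsto (fun z => ‖b‖ * (v z * ‖T (F n) z‖)) bdryFilter (nhds 0) := by
      simpa using h0.const_mul ‖b‖
    rw [hMmem]
    refine h1.congr' ?_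
    filter_upwards [hd] with z hz
    rw [hval n z hz, norm_mul]
    ring
  -- the cluster point lies in M
  have hwM : w' ∈ M := by
    by_contra hnot
    haveI : IsClosed (M : Set Hv) := hMclosed
    let π : Hv →L[ℂ] (Hv ⧸ M) := M.mkQ.mkContinuous 1
      (fun x => by simpa using Submodule.Quotient.norm_mk_le M x)
    have hπapp : ∀ x : Hv, π x = Submodule.Quotient.mk x := fun x => rfl
    have hπw : π w' ≠ 0 := by
      rw [hπapp, ne_eq, Submodule.Quotient.mk_eq_zero]
      exact hnot
    obtain ⟨φ, _, hφ2⟩ := exists_dual_vector ℂ (π w') (norm_ne_zero_iff.mpr hπw)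
    set ℓ : Hv →L[ℂ] ℂ := φ.comp π with hℓdef
    have h0 : Tendsto (fun n => ℓ (S (g n))) atTop (nhds 0) := by
      have hz : ∀ n, ℓ (S (g n)) = 0 := by
        intro n
        have : π (S (g n)) = 0 := by
          rw [hπapp, Submodule.Quotient.mk_eq_zero]
          exact hg_mem n
        simp [hℓdef, this]
      have : (fun n => ℓ (S (g n))) = fun _ => (0:ℂ) := funext hz
      rw [this]
      exact tendsto_const_nhds
    have hℓw := hclw ℓ 0 h0
    have : φ (π w') = 0 := hℓw
    rw [hφ2] at this
    have h5 : ‖π w'‖ = 0 := by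
      have := this
      simpa using this
    exact hπw (norm_eq_zero.mp h5)
  -- conclude
  have hSfM : S f ∈ M := by
    have : (b⁻¹ : ℂ) • w' ∈ M := M.smul_mem _ hwM
    have heq : (b⁻¹ : ℂ) • w' = S f := by
      rw [hw_eq, smul_smul, inv_mul_cancel₀ hb0, one_smul]
    rwa [heq] at this
  exact hSfM
end

section
/- Let T be an intrinsic operator and X an initial space with T : X → H_v bounded. For N ∈ ℕ set D_N = {z ∈ D : ||T* K_z||_{X*} > N}. If lim_{N→∞} sup_{z∈D_N} v(z)·||T* K_z||_{X*} = 0, then T : X → H_v is compact. -/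
open Metric Filter Topology

/-- Let `T` be an intrinsic operator and `X` an initial space with
`T : X → H_v` bounded (realized by `S : X →L[ℂ] Hv`).  For `N ∈ ℕ` set
`D_N = {z ∈ 𝔻 : ‖T* K_z‖_{X*} > N}`.  If
`lim_{N → ∞} sup_{z ∈ D_N} v z * ‖T* K_z‖_{X*} = 0` (the supremum over an empty set being
`0 = sSup ∅`), then `T : X → H_v` is compact. -/
theorem stmt_17 {X Hv : Type*}
    [NormedAddCommGroup X] [NormedSpace ℂ X] [CompleteSpace X]
    [NormedAddCommGroup Hv] [NormedSpace ℂ Hv] [CompleteSpace Hv]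
    (v : ℂ → ℝ)
    (hv_cont : ContinuousOn v UnitDisk)
    (hv_pos : ∀ z ∈ UnitDisk, 0 < v z)
    (hv_le1 : ∀ z ∈ UnitDisk, v z ≤ 1)
    (hv_rad : ∀ z ∈ UnitDisk, ∀ w ∈ UnitDisk, ‖z‖ = ‖w‖ → v z = v w)
    (hv_mono : ∀ z ∈ UnitDisk, ∀ w ∈ UnitDisk, ‖z‖ ≤ ‖w‖ → v w ≤ v z)
    (hv_lim : Tendsto v bdryFilter (nhds 0))
    (ιX : X →ₗ[ℂ] (ℂ → ℂ)) (hιX_inj : Function.Injective ιX)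
    (hιX_hol : ∀ f : X, DifferentiableOn ℂ (ιX f) UnitDisk)
    (hX_poly : ∀ q : Polynomial ℂ, ∃ f : X, ∀ z ∈ UnitDisk, ιX f z = q.eval z)
    (hX_ball : ∀ u : ℕ → X, (∀ n, ‖u n‖ ≤ 1) →
      ∃ (f : X) (σ : ℕ → ℕ), StrictMono σ ∧ ‖f‖ ≤ 1 ∧
        TendstoLocallyUniformlyOn (fun k => ιX (u (σ k))) (ιX f) atTop UnitDisk)
    (j : Hv →ₗ[ℂ] (ℂ → ℂ)) (hj_inj : Function.Injective j)
    (hj_hol : ∀ g : Hv, DifferentiableOn ℂ (j g) UnitDisk)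
    (hj_le : ∀ (g : Hv), ∀ z ∈ UnitDisk, v z * ‖j g z‖ ≤ ‖g‖)
    (hj_norm : ∀ (g : Hv) (C : ℝ), 0 ≤ C → (∀ z ∈ UnitDisk, v z * ‖j g z‖ ≤ C) → ‖g‖ ≤ C)
    (hj_surj : ∀ f : ℂ → ℂ, DifferentiableOn ℂ f UnitDisk →
      (∃ C : ℝ, ∀ z ∈ UnitDisk, v z * ‖f z‖ ≤ C) → ∃ g : Hv, ∀ z ∈ UnitDisk, j g z = f z)
    (K : ℂ → (Hv →L[ℂ] ℂ)) (hK : ∀ z ∈ UnitDisk, ∀ g : Hv, K z g = j g z)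
    (T : (ℂ → ℂ) →ₗ[ℂ] (ℂ → ℂ))
    (hT_hol : ∀ f : ℂ → ℂ, DifferentiableOn ℂ f UnitDisk →
      DifferentiableOn ℂ (T f) UnitDisk)
    (hT_intr : ∀ (F : ℕ → (ℂ → ℂ)) (f : ℂ → ℂ),
      (∀ n, DifferentiableOn ℂ (F n) UnitDisk) → DifferentiableOn ℂ f UnitDisk →
      TendstoLocallyUniformlyOn F f atTop UnitDisk →
      TendstoLocallyUniformlyOn (fun n => T (F n)) (T f) atTop UnitDisk)
    (S : X →L[ℂ] Hv) (hS : ∀ f : X, ∀ z ∈ UnitDisk, j (S f) z = T (ιX f) z)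
    (hlim : Tendsto (fun N : ℕ => sSup ((fun z => v z * ‖(K z).comp S‖) ''
        {z ∈ UnitDisk | (N : ℝ) < ‖(K z).comp S‖})) atTop (nhds 0)) :
    IsCompactOperator S := by
  -- auxiliary bound
  have boundAux : ∀ z ∈ UnitDisk, v z * ‖(K z).comp S‖ ≤ ‖S‖ := by
    intro z hz
    have hvz := hv_pos z hz
    rw [mul_comm, ← le_div_iff₀ hvz]
    refine ContinuousLinearMap.opNorm_le_bound _ (div_nonneg (norm_nonneg S) hvz.le) fun x => ?_
    have h1 : ((K z).comp S) x = j (S x) z := by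
      simp [ContinuousLinearMap.comp_apply, hK z hz]
    rw [h1, div_mul_eq_mul_div, le_div_iff₀ hvz]
    have h2 := hj_le (S x) z hz
    have h3 := S.le_opNorm x
    nlinarith [norm_nonneg (j (S x) z)]
  -- core: every sequence in the unit ball has a subsequence with convergent image
  have key : ∀ u : ℕ → X, (∀ n, ‖u n‖ ≤ 1) →
      ∃ (g : Hv) (σ : ℕ → ℕ), StrictMono σ ∧
        Tendsto (fun k => S (u (σ k))) atTop (𝓝 g) := by
    intro u hu
    obtain ⟨f, σ, hσ, hf1, hTLU⟩ := hX_ball u hu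
    refine ⟨S f, σ, hσ, ?_⟩
    have hTLU' : TendstoLocallyUniformlyOn (fun k => T (ιX (u (σ k)))) (T (ιX f))
        atTop UnitDisk :=
      hT_intr _ _ (fun k => hιX_hol _) (hιX_hol f) hTLU
    rw [Metric.tendsto_atTop]
    intro ε hε
    -- pick N
    obtain ⟨N, hsup⟩ := (hlim.eventually (Iio_mem_nhds (show (0:ℝ) < ε/4 by positivity))).exists
    have hDN : ∀ z ∈ UnitDisk, (N : ℝ) < ‖(K z).comp S‖ → v z * ‖(K z).comp S‖ < ε/4 := by
      intro z hz hNz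
      have hmem : v z * ‖(K z).comp S‖ ∈ (fun z => v z * ‖(K z).comp S‖) ''
          {z ∈ UnitDisk | (N : ℝ) < ‖(K z).comp S‖} := ⟨z, ⟨hz, hNz⟩, rfl⟩
      refine lt_of_le_of_lt (le_csSup ?_ hmem) hsup
      refine ⟨‖S‖, ?_⟩
      rintro x ⟨w, ⟨hw1, _⟩, rfl⟩
      exact boundAux w hw1
    -- boundary smallness
    set η : ℝ := ε / (4 * ((N : ℝ) + 1)) with hη_def
    have hη : 0 < η := by positivity
    have hev : ∀ᶠ b in nhdsWithin 1 (Set.Iio 1), ∀ z : ℂ, ‖z‖ = b → |v z| < η := by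
      have h := Metric.tendsto_nhds.mp hv_lim η hη
      rw [bdryFilter, eventually_comap] at h
      simpa [Real.dist_eq] using h
    obtain ⟨δ, hδ, hδsub⟩ := Metric.mem_nhdsWithin_iff.mp hev
    have hbdry : ∀ z ∈ UnitDisk, 1 - δ < ‖z‖ → v z < η := by
      intro z hz h1
      have hz1 : ‖z‖ < 1 := mem_ball_zero_iff.mp hz
      have hmem : ‖z‖ ∈ Metric.ball (1:ℝ) δ ∩ Set.Iio 1 := by
        constructor
        · rw [mem_ball, Real.dist_eq]
          rw [abs_lt]; constructor <;> linarith
        · exact hz1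
      have := hδsub hmem z rfl
      exact lt_of_le_of_lt (le_abs_self _) this
    -- compact core
    set r : ℝ := max (1 - δ) 0 with hr_def
    have hr1 : r < 1 := max_lt (by linarith) one_pos
    have hKc : Metric.closedBall (0:ℂ) r ⊆ UnitDisk := closedBall_subset_ball hr1
    have hUC : TendstoUniformlyOn (fun k => T (ιX (u (σ k)))) (T (ιX f)) atTop
        (Metric.closedBall (0:ℂ) r) :=
      (tendstoLocallyUniformlyOn_iff_tendstoUniformlyOn_of_compact
        (isCompact_closedBall _ _)).mp (hTLU'.mono hKc)
    have hUC' := Metric.tendstoUniformlyOn_iff.mp hUC (ε/2) (by positivity)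
    rw [eventually_atTop] at hUC'
    obtain ⟨M, hM⟩ := hUC'
    refine ⟨M, fun k hk => ?_⟩
    set gk : Hv := S (u (σ k)) - S f with hgk_def
    have hd2 : ‖u (σ k) - f‖ ≤ 2 := by
      have := norm_sub_le (u (σ k)) f
      have := hu (σ k)
      linarith
    have hjgk : ∀ z ∈ UnitDisk, j gk z = ((K z).comp S) (u (σ k) - f) := by
      intro z hz
      rw [ContinuousLinearMap.comp_apply, hK z hz, map_sub S, hgk_def]
    have hjgkT : ∀ z ∈ UnitDisk, j gk z = T (ιX (u (σ k))) z - T (ιX f) z := by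
      intro z hz
      rw [hgk_def, map_sub, Pi.sub_apply, hS _ z hz, hS _ z hz]
    have hbound : ∀ z ∈ UnitDisk, v z * ‖j gk z‖ ≤ ε/2 := by
      intro z hz
      have hvz := hv_pos z hz
      by_cases hzr : ‖z‖ ≤ r
      · -- compact part: uniform convergence
        have hzK : z ∈ Metric.closedBall (0:ℂ) r := mem_closedBall_zero_iff.mpr hzr
        have h1 := hM k hk z hzK
        rw [dist_eq_norm] at h1
        have h2 : ‖j gk z‖ < ε/2 := by
          rw [hjgkT z hz, ← norm_neg]
          simpa [neg_sub] using h1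
        have h3 := hv_le1 z hz
        nlinarith [norm_nonneg (j gk z)]
      · push_neg at hzr
        have hzδ : 1 - δ < ‖z‖ := lt_of_le_of_lt (le_max_left _ _) hzr
        have hvη : v z < η := hbdry z hz hzδ
        have hAle : ‖j gk z‖ ≤ ‖(K z).comp S‖ * ‖u (σ k) - f‖ := by
          rw [hjgk z hz]; exact ContinuousLinearMap.le_opNorm _ _
        by_cases hAN : ‖(K z).comp S‖ ≤ (N : ℝ)
        · have step1 : v z * ‖j gk z‖ ≤ η * ((N : ℝ) * 2) := by
            have h1 : ‖j gk z‖ ≤ (N : ℝ) * 2 := by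
              calc ‖j gk z‖ ≤ ‖(K z).comp S‖ * ‖u (σ k) - f‖ := hAle
                _ ≤ (N : ℝ) * 2 := by
                  apply mul_le_mul hAN hd2 (norm_nonneg _) (Nat.cast_nonneg N)
            exact mul_le_mul hvη.le h1 (norm_nonneg _) hη.le
          refine le_trans step1 ?_
          rw [hη_def, div_mul_eq_mul_div, div_le_div_iff₀ (by positivity) (by norm_num)]
          nlinarith [hε.le, (Nat.cast_nonneg N : (0:ℝ) ≤ (N:ℝ))]
        · push_neg at hAN
          have h1 := hDN z hz hAN
          calc v z * ‖j gk z‖ ≤ v z * (‖(K z).comp S‖ * ‖u (σ k) - f‖) := by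
                exact mul_le_mul_of_nonneg_left hAle hvz.le
            _ = (v z * ‖(K z).comp S‖) * ‖u (σ k) - f‖ := by ring
            _ ≤ (ε/4) * 2 := by
                apply mul_le_mul h1.le hd2 (norm_nonneg _) (by positivity)
            _ = ε/2 := by ring
    have := hj_norm gk (ε/2) (by positivity) hbound
    rw [dist_eq_norm]
    calc ‖S (u (σ k)) - S f‖ = ‖gk‖ := rfl
      _ ≤ ε/2 := this
      _ < ε := by linarith
  -- conclude compactness
  refine (isCompactOperator_iff_exists_mem_nhds_isCompact_closure_image _).mpr
    ⟨Metric.closedBall 0 1, closedBall_mem_nhds _ one_pos, ?_⟩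
  refine IsSeqCompact.isCompact ?_
  intro x hx
  have hchoose : ∀ n : ℕ, ∃ w : X, ‖w‖ ≤ 1 ∧ dist (x n) (S w) < 1 / (n + 1) := by
    intro n
    have := Metric.mem_closure_iff.mp (hx n) (1 / (n + 1)) (by positivity)
    obtain ⟨b, hb, hbd⟩ := this
    obtain ⟨w, hw, rfl⟩ := hb
    exact ⟨w, mem_closedBall_zero_iff.mp hw, hbd⟩
  choose w hw1 hw2 using hchoose
  obtain ⟨g, σ, hσ, hg⟩ := key w hw1
  refine ⟨g, ?_, σ, hσ, ?_⟩
  · exact mem_closure_of_tendsto hg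
      (Filter.Eventually.of_forall fun k => ⟨w (σ k), mem_closedBall_zero_iff.mpr (hw1 _), rfl⟩)
  · rw [tendsto_iff_dist_tendsto_zero]
    apply squeeze_zero (fun k => dist_nonneg)
      (fun k => le_trans (dist_triangle (x (σ k)) (S (w (σ k))) g)
        (add_le_add (hw2 (σ k)).le le_rfl))
    have h1 : Tendsto (fun k : ℕ => 1 / ((σ k : ℝ) + 1)) atTop (𝓝 0) :=
      tendsto_one_div_add_atTop_nhds_zero_nat.comp hσ.tendsto_atTop
    have h2 : Tendsto (fun k => dist (S (w (σ k))) g) atTop (𝓝 0) :=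
      tendsto_iff_dist_tendsto_zero.mp hg
    simpa using h1.add h2
end
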